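/- arXiv:math/0612366 — 2 statements merged into one kernel-verified Lean document; each statement's English description precedes it below -/
import Mathlib

section
/- Let M be an o-minimal expansion of a real closed field, A ⊆ M^k definable and locally definably compact, and ρ : A → C a definable compactification of A (C definably compact, ρ a definable homeomorphism onto its image, ρ(A) dense in C). Then ρ(A) is open in C. Conversely, if ρ(A) is open in C then A is locally definably compact. -/
open FirstOrder Set Classical

/-- `Defin L M s` : the set `s ⊆ Mᵏ` is definable in the structure `M` with parameters from `M`. -/
def Defin (L : FirstOrder.Language) (M : Type) [L.Structure M] {k : ℕ}
    (s : Set (Fin k → M)) : Prop :=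
  Set.Definable (Set.univ : Set M) L s

/-- `M` is an o-minimal structure: the order is definable, and every definable subset of `M`
is a finite union of points and open intervals (possibly unbounded). -/
def IsOMin (L : FirstOrder.Language) (M : Type) [L.Structure M] [LinearOrder M] : Prop :=
  Set.Definable (Set.univ : Set M) L {p : Fin 2 → M | p 0 < p 1} ∧
  ∀ s : Set (Fin 1 → M), Defin L M s →
    ∃ (F : Finset M) (n : ℕ) (J : Fin n → Set M),
      (∀ i, (∃ a b, J i = Set.Ioo a b) ∨ (∃ a, J i = Set.Ioi a) ∨
            (∃ b, J i = Set.Iio b) ∨ J i = Set.univ) ∧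
      (fun p : Fin 1 → M => p 0) '' s = ↑F ∪ ⋃ i, J i

/-- `M` expands an ordered group: the graph of addition is definable. -/
def ExpandsGroup (L : FirstOrder.Language) (M : Type) [L.Structure M] [Add M] : Prop :=
  Set.Definable (Set.univ : Set M) L {p : Fin 3 → M | p 0 + p 1 = p 2}

/-- `M` expands a (real closed, by o-minimality) field: graphs of `+` and `*` are definable. -/
def ExpandsField (L : FirstOrder.Language) (M : Type) [L.Structure M] [Add M] [Mul M] : Prop :=
  Set.Definable (Set.univ : Set M) L {p : Fin 3 → M | p 0 + p 1 = p 2} ∧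
  Set.Definable (Set.univ : Set M) L {p : Fin 3 → M | p 0 * p 1 = p 2}

/-- o-minimal dimension of a subset of `Mᵏ` : the largest `d` such that some coordinate
projection onto `M^d` has nonempty interior; `-1` for the empty set. -/

noncomputable def odim {M : Type} [TopologicalSpace M] {k : ℕ} (s : Set (Fin k → M)) : ℤ :=
  if s.Nonempty then
    ((sSup {d : ℕ | ∃ f : Fin d → Fin k, Function.Injective f ∧
      (interior ((fun x : Fin k → M => x ∘ f) '' s)).Nonempty} : ℕ) : ℤ)
  else -1

/-- `A ⊆ Mᵏ` is locally definably compact: every point of `A` has a definably compact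
(definable, closed, bounded) neighborhood in `A`. -/
def LocallyDefCompact (L : FirstOrder.Language) (M : Type) [L.Structure M] [LinearOrder M]
    [Neg M] [TopologicalSpace M] {k : ℕ} (A : Set (Fin k → M)) : Prop :=
  ∀ a ∈ A, ∃ K : Set (Fin k → M), Defin L M K ∧ K ⊆ A ∧ IsClosed K ∧
    (∃ r : M, ∀ p ∈ K, ∀ i, -r ≤ p i ∧ p i ≤ r) ∧
    ∃ U : Set (Fin k → M), IsOpen U ∧ a ∈ U ∧ U ∩ A ⊆ K

section Toolkit

variable {L : FirstOrder.Language} {M : Type} [L.Structure M]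

lemma dinter {n : ℕ} {S T : Set (Fin n → M)} (hS : Defin L M S) (hT : Defin L M T) :
    Defin L M (S ∩ T) := Set.Definable.inter hS hT

lemma dunion {n : ℕ} {S T : Set (Fin n → M)} (hS : Defin L M S) (hT : Defin L M T) :
    Defin L M (S ∪ T) := Set.Definable.union hS hT

lemma dcompl {n : ℕ} {S : Set (Fin n → M)} (hS : Defin L M S) :
    Defin L M Sᶜ := Set.Definable.compl hS

lemma dre {n m : ℕ} (f : Fin n → Fin m) {S : Set (Fin n → M)} (hS : Defin L M S) :
    Defin L M {p : Fin m → M | p ∘ f ∈ S} := Set.Definable.preimage_comp f hS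

lemma dim {n m : ℕ} (f : Fin n → Fin m) {S : Set (Fin m → M)} (hS : Defin L M S) :
    Defin L M ((fun p : Fin m → M => p ∘ f) '' S) := Set.Definable.image_comp hS f

lemma dIInter {n m : ℕ} {f : Fin m → Set (Fin n → M)} (hf : ∀ i, Defin L M (f i)) :
    Defin L M (⋂ i, f i) := by
  have h := Set.definable_biInter_finset (A := (Set.univ : Set M)) (f := f)
    (fun i => hf i) Finset.univ
  simpa [Defin] using h

/-- append recomposition -/
lemma append_comp_castAdd {n m : ℕ} (q : Fin (n + m) → M) :
    Fin.append (q ∘ Fin.castAdd m) (q ∘ Fin.natAdd n) = q := by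
  funext i
  refine Fin.addCases (fun i => ?_) (fun i => ?_) i
  · rw [Fin.append_left]; rfl
  · rw [Fin.append_right]; rfl

lemma dexists {n m : ℕ} {S : Set (Fin (n + m) → M)} (hS : Defin L M S) :
    Defin L M {p : Fin n → M | ∃ x : Fin m → M, Fin.append p x ∈ S} := by
  have h := dim (Fin.castAdd m) hS
  convert h using 1
  ext p
  constructor
  · rintro ⟨x, hx⟩
    exact ⟨Fin.append p x, hx, by funext i; exact Fin.append_left p x i⟩
  · rintro ⟨q, hq, rfl⟩
    refine ⟨q ∘ Fin.natAdd n, ?_⟩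
    show Fin.append (q ∘ Fin.castAdd m) (q ∘ Fin.natAdd n) ∈ S
    rwa [append_comp_castAdd]

lemma dforall {n m : ℕ} {S : Set (Fin (n + m) → M)} (hS : Defin L M S) :
    Defin L M {p : Fin n → M | ∀ x : Fin m → M, Fin.append p x ∈ S} := by
  have h := dcompl (dexists (dcompl hS))
  convert h using 1
  ext p
  simp

end Toolkit
section Atoms

set_option linter.unusedSectionVars false

variable {L : FirstOrder.Language} {M : Type} [L.Structure M] [Field M] [LinearOrder M] [IsStrictOrderedRing M]

open FirstOrder.Language

lemma dEQC1 (c : M) : Defin L M {p : Fin 1 → M | p 0 = c} := by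
  refine ⟨Term.equal (Term.var 0)
    ((L.con (⟨c, Set.mem_univ c⟩ : (Set.univ : Set M))).term), ?_⟩
  ext p
  rw [mem_setOf_eq, mem_setOf_eq, Formula.realize_equal, Term.realize_var, Term.realize_con]

lemma dLT (hlt : Defin L M {p : Fin 2 → M | p 0 < p 1}) {n : ℕ} (i j : Fin n) :
    Defin L M {p : Fin n → M | p i < p j} := by
  have h := dre ![i, j] hlt
  convert h using 1
  rfl

lemma dLE (hlt : Defin L M {p : Fin 2 → M | p 0 < p 1}) {n : ℕ} (i j : Fin n) :
    Defin L M {p : Fin n → M | p i ≤ p j} := by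
  have h := dcompl (dLT hlt j i)
  convert h using 1
  ext p
  simp [not_lt]

lemma dEQ (hlt : Defin L M {p : Fin 2 → M | p 0 < p 1}) {n : ℕ} (i j : Fin n) :
    Defin L M {p : Fin n → M | p i = p j} := by
  have h := dinter (dLE hlt i j) (dLE hlt j i)
  convert h using 1
  ext p
  simp only [mem_setOf_eq, mem_inter_iff]
  exact le_antisymm_iff

lemma dEQC {n : ℕ} (i : Fin n) (c : M) : Defin L M {p : Fin n → M | p i = c} := by
  have h := dre ![i] (dEQC1 (L := L) (M := M) c)
  convert h using 1
  rfl

lemma dADD (hadd : Defin L M {p : Fin 3 → M | p 0 + p 1 = p 2}) {n : ℕ} (i j l : Fin n) :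
    Defin L M {p : Fin n → M | p i + p j = p l} := by
  have h := dre ![i, j, l] hadd
  convert h using 1
  rfl

lemma dMUL (hmul : Defin L M {p : Fin 3 → M | p 0 * p 1 = p 2}) {n : ℕ} (i j l : Fin n) :
    Defin L M {p : Fin n → M | p i * p j = p l} := by
  have h := dre ![i, j, l] hmul
  convert h using 1
  rfl

lemma dCLT (hlt : Defin L M {p : Fin 2 → M | p 0 < p 1}) {n : ℕ} (c : M) (i : Fin n) :
    Defin L M {p : Fin n → M | c < p i} := by
  have h := dexists (dinter (dEQC (Fin.natAdd n (0 : Fin 1)) c)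
    (dLT hlt (Fin.natAdd n (0 : Fin 1)) (Fin.castAdd 1 i)))
  convert h using 1
  ext p
  constructor
  · intro hp
    refine ⟨fun _ => c, ?_⟩
    simp only [mem_inter_iff, mem_setOf_eq, Fin.append_left, Fin.append_right]
    exact ⟨trivial, hp⟩
  · rintro ⟨x, hx⟩
    simp [Fin.append_left, Fin.append_right] at hx
    rw [← hx.1]
    exact hx.2

lemma dLTC (hlt : Defin L M {p : Fin 2 → M | p 0 < p 1}) {n : ℕ} (i : Fin n) (c : M) :
    Defin L M {p : Fin n → M | p i < c} := by
  have h := dexists (dinter (dEQC (Fin.natAdd n (0 : Fin 1)) c)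
    (dLT hlt (Fin.castAdd 1 i) (Fin.natAdd n (0 : Fin 1))))
  convert h using 1
  ext p
  constructor
  · intro hp
    refine ⟨fun _ => c, ?_⟩
    simp only [mem_inter_iff, mem_setOf_eq, Fin.append_left, Fin.append_right]
    exact ⟨trivial, hp⟩
  · rintro ⟨x, hx⟩
    simp [Fin.append_left, Fin.append_right] at hx
    rw [← hx.1]
    exact hx.2

lemma dLEC (hlt : Defin L M {p : Fin 2 → M | p 0 < p 1}) {n : ℕ} (i : Fin n) (c : M) :
    Defin L M {p : Fin n → M | p i ≤ c} := by
  have h := dcompl (dCLT hlt c i)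
  convert h using 1
  ext p
  simp [not_lt]

lemma dCLE (hlt : Defin L M {p : Fin 2 → M | p 0 < p 1}) {n : ℕ} (c : M) (i : Fin n) :
    Defin L M {p : Fin n → M | c ≤ p i} := by
  have h := dcompl (dLTC hlt i c)
  convert h using 1
  ext p
  simp [not_lt]

end Atoms
section Derived

set_option linter.unusedSectionVars false

variable {L : FirstOrder.Language} {M : Type} [L.Structure M] [Field M] [LinearOrder M] [IsStrictOrderedRing M]

lemma dLT3 (hlt : Defin L M {p : Fin 2 → M | p 0 < p 1})
    (hadd : Defin L M {p : Fin 3 → M | p 0 + p 1 = p 2}) {n : ℕ} (a b c : Fin n) :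
    Defin L M {p : Fin n → M | p a < p b + p c} := by
  have h := dexists (dinter
    (dADD hadd (Fin.castAdd 1 b) (Fin.castAdd 1 c) (Fin.natAdd n (0 : Fin 1)))
    (dLT hlt (Fin.castAdd 1 a) (Fin.natAdd n (0 : Fin 1))))
  convert h using 1
  ext p
  simp only [mem_setOf_eq, mem_inter_iff, Fin.append_left, Fin.append_right]
  constructor
  · intro hp
    exact ⟨fun _ => p b + p c, rfl, hp⟩
  · rintro ⟨x, h1, h2⟩
    rwa [← h1] at h2

lemma dAbsSubLT (hlt : Defin L M {p : Fin 2 → M | p 0 < p 1})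
    (hadd : Defin L M {p : Fin 3 → M | p 0 + p 1 = p 2}) {n : ℕ} (a b t : Fin n) :
    Defin L M {p : Fin n → M | |p a - p b| < p t} := by
  have h := dinter (dLT3 hlt hadd a b t) (dLT3 hlt hadd b a t)
  convert h using 1
  ext p
  simp only [mem_setOf_eq, mem_inter_iff, abs_sub_lt_iff]
  constructor <;> (rintro ⟨h1, h2⟩; exact ⟨by linarith, by linarith⟩)

lemma dLTCADD (hlt : Defin L M {p : Fin 2 → M | p 0 < p 1})
    (hadd : Defin L M {p : Fin 3 → M | p 0 + p 1 = p 2}) {n : ℕ} (a : Fin n) (c : M)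
    (b : Fin n) : Defin L M {p : Fin n → M | p a < c + p b} := by
  have h := dexists (dinter (dEQC (Fin.natAdd n (0 : Fin 2)) c) (dinter
    (dADD hadd (Fin.natAdd n (0 : Fin 2)) (Fin.castAdd 2 b) (Fin.natAdd n (1 : Fin 2)))
    (dLT hlt (Fin.castAdd 2 a) (Fin.natAdd n (1 : Fin 2)))))
  convert h using 1
  ext p
  simp only [mem_setOf_eq, mem_inter_iff, Fin.append_left, Fin.append_right]
  constructor
  · intro hp
    refine ⟨![c, c + p b], ?_⟩
    simp only [Matrix.cons_val_zero, Matrix.cons_val_one, Matrix.head_cons]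
    exact ⟨trivial, trivial, hp⟩
  · rintro ⟨x, h1, h2, h3⟩
    rw [← h2, h1] at h3
    exact h3

lemma dCLTADD (hlt : Defin L M {p : Fin 2 → M | p 0 < p 1})
    (hadd : Defin L M {p : Fin 3 → M | p 0 + p 1 = p 2}) {n : ℕ} (c : M) (a b : Fin n) :
    Defin L M {p : Fin n → M | c < p a + p b} := by
  have h := dexists (dinter (dEQC (Fin.natAdd n (0 : Fin 2)) c) (dinter
    (dADD hadd (Fin.castAdd 2 a) (Fin.castAdd 2 b) (Fin.natAdd n (1 : Fin 2)))
    (dLT hlt (Fin.natAdd n (0 : Fin 2)) (Fin.natAdd n (1 : Fin 2)))))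
  convert h using 1
  ext p
  simp only [mem_setOf_eq, mem_inter_iff, Fin.append_left, Fin.append_right]
  constructor
  · intro hp
    refine ⟨![c, p a + p b], ?_⟩
    simp only [Matrix.cons_val_zero, Matrix.cons_val_one, Matrix.head_cons]
    exact ⟨trivial, trivial, hp⟩
  · rintro ⟨x, h1, h2, h3⟩
    rw [h2, ← h1]
    exact h3

lemma dAbsSubCLT (hlt : Defin L M {p : Fin 2 → M | p 0 < p 1})
    (hadd : Defin L M {p : Fin 3 → M | p 0 + p 1 = p 2}) {n : ℕ} (a : Fin n) (c : M)
    (t : Fin n) : Defin L M {p : Fin n → M | |p a - c| < p t} := by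
  have h := dinter (dLTCADD hlt hadd a c t) (dCLTADD hlt hadd c a t)
  convert h using 1
  ext p
  simp only [mem_setOf_eq, mem_inter_iff, abs_sub_lt_iff]
  constructor <;> (rintro ⟨h1, h2⟩; exact ⟨by linarith, by linarith⟩)

lemma dADDEQC (hadd : Defin L M {p : Fin 3 → M | p 0 + p 1 = p 2}) {n : ℕ}
    (a b : Fin n) (c : M) : Defin L M {p : Fin n → M | p a + p b = c} := by
  have h := dexists (dinter
    (dADD hadd (Fin.castAdd 1 a) (Fin.castAdd 1 b) (Fin.natAdd n (0 : Fin 1)))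
    (dEQC (Fin.natAdd n (0 : Fin 1)) c))
  convert h using 1
  ext p
  simp only [mem_setOf_eq, mem_inter_iff, Fin.append_left, Fin.append_right]
  constructor
  · intro hp
    exact ⟨fun _ => p a + p b, rfl, hp⟩
  · rintro ⟨x, h1, h2⟩
    rw [h1, h2]

lemma dABS (hlt : Defin L M {p : Fin 2 → M | p 0 < p 1})
    (hadd : Defin L M {p : Fin 3 → M | p 0 + p 1 = p 2}) {n : ℕ} (a b : Fin n) :
    Defin L M {p : Fin n → M | |p a| = p b} := by
  have h := dunion (dinter (dCLE hlt (0 : M) a) (dEQ hlt b a))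
    (dinter (dLTC hlt a (0 : M)) (dADDEQC hadd a b (0 : M)))
  convert h using 1
  ext p
  simp only [mem_setOf_eq, mem_inter_iff, mem_union]
  constructor
  · intro habs
    rcases le_or_gt 0 (p a) with hc | hc
    · exact Or.inl ⟨hc, by rw [← habs, abs_of_nonneg hc]⟩
    · exact Or.inr ⟨hc, by rw [← habs, abs_of_neg hc]; ring⟩
  · rintro (⟨h1, h2⟩ | ⟨h1, h2⟩)
    · rw [abs_of_nonneg h1]; exact h2.symm
    · rw [abs_of_neg h1]; linarith

lemma dPsiRel (hlt : Defin L M {p : Fin 2 → M | p 0 < p 1})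
    (hadd : Defin L M {p : Fin 3 → M | p 0 + p 1 = p 2})
    (hmul : Defin L M {p : Fin 3 → M | p 0 * p 1 = p 2}) {n : ℕ} (a b : Fin n) :
    Defin L M {p : Fin n → M | p a * (1 + |p b|) = p b} := by
  have h := dexists (dinter (dABS hlt hadd (Fin.castAdd 3 b) (Fin.natAdd n (0 : Fin 3)))
    (dinter (dEQC (Fin.natAdd n (1 : Fin 3)) (1 : M)) (dinter
      (dADD hadd (Fin.natAdd n (1 : Fin 3)) (Fin.natAdd n (0 : Fin 3)) (Fin.natAdd n (2 : Fin 3)))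
      (dMUL hmul (Fin.castAdd 3 a) (Fin.natAdd n (2 : Fin 3)) (Fin.castAdd 3 b)))))
  convert h using 1
  ext p
  simp only [mem_setOf_eq, mem_inter_iff, Fin.append_left, Fin.append_right]
  constructor
  · intro hp
    refine ⟨![|p b|, 1, 1 + |p b|], ?_⟩
    simp only [Matrix.cons_val_zero, Matrix.cons_val_one, Matrix.head_cons,
      Matrix.cons_val_two, Matrix.vecTail, Matrix.vecHead, Function.comp_apply,
      Fin.succ_zero_eq_one]
    exact ⟨trivial, trivial, trivial, hp⟩
  · rintro ⟨x, h1, h2, h3, h4⟩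
    rw [← h3, h2, ← h1] at h4
    exact h4

end Derived
section Topo

set_option linter.unusedSectionVars false

variable {M : Type} [Field M] [LinearOrder M] [IsStrictOrderedRing M] [TopologicalSpace M] [OrderTopology M]

/-- open box of radius ε around p -/
def mbox {n : ℕ} (p : Fin n → M) (ε : M) : Set (Fin n → M) := {q | ∀ i, |q i - p i| < ε}

lemma mbox_isOpen {n : ℕ} (p : Fin n → M) (ε : M) : IsOpen (mbox p ε) := by
  have hrw : mbox p ε = ⋂ i, (fun q : Fin n → M => q i) ⁻¹' (Ioo (p i - ε) (p i + ε)) := by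
    ext q
    simp only [mbox, mem_setOf_eq, mem_iInter, mem_preimage, mem_Ioo, abs_sub_lt_iff]
    refine forall_congr' fun i => ?_
    constructor <;> (rintro ⟨h1, h2⟩; exact ⟨by linarith, by linarith⟩)
  rw [hrw]
  exact isOpen_iInter_of_finite fun i => (isOpen_Ioo).preimage (continuous_apply i)

lemma self_mem_mbox {n : ℕ} (p : Fin n → M) {ε : M} (hε : 0 < ε) : p ∈ mbox p ε :=
  fun i => by simpa using hε

lemma exists_mbox_subset {n : ℕ} {O : Set (Fin n → M)} (hO : IsOpen O) {p : Fin n → M}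
    (hp : p ∈ O) : ∃ ε : M, 0 < ε ∧ mbox p ε ⊆ O := by
  have hmem : O ∈ nhds p := hO.mem_nhds hp
  rw [nhds_pi, Filter.mem_pi] at hmem
  obtain ⟨I, hIfin, t, ht, hsub⟩ := hmem
  have h2 : ∀ i, ∃ a b, p i ∈ Ioo a b ∧ Ioo a b ⊆ t i := fun i =>
    mem_nhds_iff_exists_Ioo_subset.mp (ht i)
  choose a b hmem2 hIoo using h2
  set g : Fin n → M := fun i => min (p i - a i) (b i - p i) with hg
  have hgpos : ∀ i, 0 < g i := by
    intro i
    obtain ⟨h1, h2⟩ := hmem2 i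
    simp only [hg, lt_min_iff]
    constructor <;> linarith
  set F : Finset M := insert (1 : M) (Finset.univ.image g) with hF
  have hFne : F.Nonempty := ⟨1, Finset.mem_insert_self _ _⟩
  have hpos : ∀ x ∈ F, 0 < x := by
    intro x hx
    rcases Finset.mem_insert.mp hx with hx1 | hx1
    · rw [hx1]; norm_num
    · obtain ⟨i, _, hi⟩ := Finset.mem_image.mp hx1
      rw [← hi]; exact hgpos i
  refine ⟨F.min' hFne, hpos _ (F.min'_mem hFne), ?_⟩
  intro q hq
  apply hsub
  intro i _
  apply hIoo i
  have hle : F.min' hFne ≤ g i :=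
    Finset.min'_le _ _ (Finset.mem_insert_of_mem (Finset.mem_image_of_mem g (Finset.mem_univ i)))
  have hqi := hq i
  rw [abs_sub_lt_iff] at hqi
  rw [hg] at hle
  simp only [le_inf_iff] at hle
  exact ⟨by linarith [hqi.1, hqi.2, hle.1, hle.2], by linarith [hqi.1, hqi.2, hle.1, hle.2]⟩

lemma mem_closure_iff_mbox {n : ℕ} {S : Set (Fin n → M)} {p : Fin n → M} :
    p ∈ closure S ↔ ∀ ε : M, 0 < ε → ∃ q ∈ S, ∀ i, |q i - p i| < ε := by
  constructor
  · intro hp ε hε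
    rcases mem_closure_iff.mp hp (mbox p ε) (mbox_isOpen p ε) (self_mem_mbox p hε) with
      ⟨q, hq1, hq2⟩
    exact ⟨q, hq2, fun i => hq1 i⟩
  · intro H
    rw [mem_closure_iff]
    intro O hO hpO
    obtain ⟨ε, hε, hsub⟩ := exists_mbox_subset hO hpO
    obtain ⟨q, hqS, hq⟩ := H ε hε
    exact ⟨q, hsub hq, hqS⟩

lemma bdd_closure {n : ℕ} {S : Set (Fin n → M)} {r : M}
    (hbd : ∀ p ∈ S, ∀ i, |p i| ≤ r) : ∀ p ∈ closure S, ∀ i, |p i| ≤ r := by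
  intro p hp i
  by_contra hgt
  push_neg at hgt
  obtain ⟨q, hqS, hq⟩ := mem_closure_iff_mbox.mp hp (|p i| - r) (by linarith)
  have h1 := hbd q hqS i
  have h2 := hq i
  have h3 : |p i| - |q i| ≤ |p i - q i| := abs_sub_abs_le_abs_sub _ _
  rw [abs_sub_comm] at h2
  linarith

end Topo
section Complete

set_option linter.unusedSectionVars false

variable {L : FirstOrder.Language} {M : Type} [L.Structure M] [Field M] [LinearOrder M] [IsStrictOrderedRing M]

lemma fin_iUnion_succ {α : Type*} {nn : ℕ} (J : Fin (nn + 1) → Set α) :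
    (⋃ i, J i) = (⋃ i : Fin nn, J i.castSucc) ∪ J (Fin.last nn) := by
  ext x
  simp only [mem_iUnion, mem_union]
  constructor
  · rintro ⟨i, hi⟩
    rcases Fin.eq_castSucc_or_eq_last i with ⟨j, rfl⟩ | rfl
    · exact Or.inl ⟨j, hi⟩
    · exact Or.inr hi
  · rintro (⟨j, hj⟩ | hl)
    · exact ⟨j.castSucc, hj⟩
    · exact ⟨Fin.last nn, hl⟩

private def PLub (s : Set M) : Prop := s = ∅ ∨ ∃ m, IsLUB s m
private def PGlb (s : Set M) : Prop := s = ∅ ∨ ∃ m, IsGLB s m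

lemma PLub_union {u v : Set M} (hu : PLub u) (hv : PLub v) : PLub (u ∪ v) := by
  rcases hu with rfl | ⟨m, hm⟩
  · simpa using hv
  rcases hv with rfl | ⟨m', hm'⟩
  · exact Or.inr ⟨m, by simpa using hm⟩
  · exact Or.inr ⟨m ⊔ m', hm.union hm'⟩

lemma PGlb_union {u v : Set M} (hu : PGlb u) (hv : PGlb v) : PGlb (u ∪ v) := by
  rcases hu with rfl | ⟨m, hm⟩
  · simpa using hv
  rcases hv with rfl | ⟨m', hm'⟩
  · exact Or.inr ⟨m, by simpa using hm⟩
  · exact Or.inr ⟨m ⊓ m', hm.union hm'⟩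

lemma PLub_iUnion : ∀ (nn : ℕ) (J : Fin nn → Set M), (∀ i, PLub (J i)) → PLub (⋃ i, J i) := by
  intro nn
  induction nn with
  | zero => intro J _; exact Or.inl (iUnion_of_empty J)
  | succ m ih =>
    intro J hJ
    rw [fin_iUnion_succ]
    exact PLub_union (ih _ fun i => hJ i.castSucc) (hJ (Fin.last m))

lemma PGlb_iUnion : ∀ (nn : ℕ) (J : Fin nn → Set M), (∀ i, PGlb (J i)) → PGlb (⋃ i, J i) := by
  intro nn
  induction nn with
  | zero => intro J _; exact Or.inl (iUnion_of_empty J)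
  | succ m ih =>
    intro J hJ
    rw [fin_iUnion_succ]
    exact PGlb_union (ih _ fun i => hJ i.castSucc) (hJ (Fin.last m))

lemma PLub_finset (F : Finset M) : PLub (↑F : Set M) := by
  by_cases hF : F.Nonempty
  · exact Or.inr ⟨F.max' hF, fun x hx => F.le_max' x hx, fun b hb => hb (F.max'_mem hF)⟩
  · exact Or.inl (by simpa [Finset.not_nonempty_iff_eq_empty.mp hF])

lemma PGlb_finset (F : Finset M) : PGlb (↑F : Set M) := by
  by_cases hF : F.Nonempty
  · exact Or.inr ⟨F.min' hF, fun x hx => F.min'_le x hx, fun b hb => hb (F.min'_mem hF)⟩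
  · exact Or.inl (by simpa [Finset.not_nonempty_iff_eq_empty.mp hF])

lemma img_eq_self {s : Set M} : (fun p : Fin 1 → M => p 0) '' {p : Fin 1 → M | p 0 ∈ s} = s := by
  ext x
  constructor
  · rintro ⟨q, hq, rfl⟩; exact hq
  · intro hx; exact ⟨fun _ => x, hx, rfl⟩

lemma exists_isLUB_defin (hmin : IsOMin L M) {s : Set M}
    (hdef : Defin L M {p : Fin 1 → M | p 0 ∈ s}) (hne : s.Nonempty)
    (hbdd : ∃ b, ∀ x ∈ s, x ≤ b) : ∃ m, IsLUB s m := by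
  obtain ⟨b, hb⟩ := hbdd
  obtain ⟨F, nn, J, hJ, himg⟩ := hmin.2 _ hdef
  rw [img_eq_self] at himg
  have hpieces : ∀ i, PLub (J i) := by
    intro i
    have hsub : J i ⊆ s := by
      rw [himg]; exact subset_union_of_subset_right (subset_iUnion J i) _
    rcases hJ i with ⟨a, b', heq⟩ | ⟨a, heq⟩ | ⟨b', heq⟩ | heq <;> rw [heq] at hsub ⊢
    · by_cases hab : a < b'
      · exact Or.inr ⟨b', isLUB_Ioo hab⟩
      · exact Or.inl (Ioo_eq_empty hab)
    · exfalso
      have h1 : max a b + 1 ∈ Ioi a := by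
        simp only [mem_Ioi]
        have := le_max_left a b
        linarith
      have := hb _ (hsub h1)
      have := le_max_right a b
      linarith
    · exact Or.inr ⟨b', isLUB_Iio⟩
    · exfalso
      have := hb _ (hsub (mem_univ (b + 1)))
      linarith
  have hP : PLub s := by
    rw [himg]
    exact PLub_union (PLub_finset F) (PLub_iUnion nn J hpieces)
  rcases hP with rfl | h
  · exact absurd hne (by simp)
  · exact h

lemma exists_isGLB_defin (hmin : IsOMin L M) {s : Set M}
    (hdef : Defin L M {p : Fin 1 → M | p 0 ∈ s}) (hne : s.Nonempty)
    (hbdd : ∃ b, ∀ x ∈ s, b ≤ x) : ∃ m, IsGLB s m := by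
  obtain ⟨b, hb⟩ := hbdd
  obtain ⟨F, nn, J, hJ, himg⟩ := hmin.2 _ hdef
  rw [img_eq_self] at himg
  have hpieces : ∀ i, PGlb (J i) := by
    intro i
    have hsub : J i ⊆ s := by
      rw [himg]; exact subset_union_of_subset_right (subset_iUnion J i) _
    rcases hJ i with ⟨a, b', heq⟩ | ⟨a, heq⟩ | ⟨b', heq⟩ | heq <;> rw [heq] at hsub ⊢
    · by_cases hab : a < b'
      · exact Or.inr ⟨a, isGLB_Ioo hab⟩
      · exact Or.inl (Ioo_eq_empty hab)
    · exact Or.inr ⟨a, isGLB_Ioi⟩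
    · exfalso
      have h1 : min b' b - 1 ∈ Iio b' := by
        simp only [mem_Iio]
        have := min_le_left b' b
        linarith
      have := hb _ (hsub h1)
      have := min_le_right b' b
      linarith
    · exfalso
      have := hb _ (hsub (mem_univ (b - 1)))
      linarith
  have hP : PGlb s := by
    rw [himg]
    exact PGlb_union (PGlb_finset F) (PGlb_iUnion nn J hpieces)
  rcases hP with rfl | h
  · exact absurd hne (by simp)
  · exact h

end Complete
section KTCore

set_option linter.unusedSectionVars false

variable {L : FirstOrder.Language} {M : Type} [L.Structure M] [Field M] [LinearOrder M] [IsStrictOrderedRing M]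
  [TopologicalSpace M] [OrderTopology M]

lemma append_comp_natAdd {n m : ℕ} (w : Fin n → M) (x : Fin m → M) :
    Fin.append w x ∘ Fin.natAdd n = x := funext fun i => Fin.append_right w x i

lemma append_comp_castAdd2 {n m : ℕ} (w : Fin n → M) (x : Fin m → M) :
    Fin.append w x ∘ Fin.castAdd m = w := funext fun i => Fin.append_left w x i

lemma kt_drop_last (hmin : IsOMin L M) (hfld : ExpandsField L M) {n : ℕ}
    {S : Set (Fin (n + 1) → M)} (hdef : Defin L M S) (hcl : IsClosed S)
    {r : M} (hbd : ∀ p ∈ S, ∀ i, |p i| ≤ r) :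
    IsClosed ((fun p : Fin (n + 1) → M => p ∘ Fin.castSucc) '' S) := by
  have hlt := hmin.1
  have hadd := hfld.1
  apply isClosed_of_closure_subset
  rintro c hc
  classical
  set Stc : M → M → Prop := fun t u => ∃ x ∈ S, x (Fin.last n) = u ∧
    ∀ i : Fin n, |x i.castSucc - c i| < t with hStc
  have f1 : ∀ t : M, 0 < t → ∃ u, Stc t u := by
    intro t ht
    obtain ⟨q, hmem, hq⟩ := mem_closure_iff_mbox.mp hc t ht
    obtain ⟨x, hxS, rfl⟩ := hmem
    exact ⟨x (Fin.last n), x, hxS, rfl, fun i => hq i⟩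
  have f2 : ∀ t u, Stc t u → |u| ≤ r := by
    rintro t u ⟨x, hxS, rfl, -⟩
    exact hbd x hxS _
  have f3 : ∀ t t' u, t ≤ t' → Stc t u → Stc t' u := by
    rintro t t' u htt ⟨x, hxS, rfl, hx⟩
    exact ⟨x, hxS, rfl, fun i => lt_of_lt_of_le (hx i) htt⟩
  -- definability of the 2-variable relation
  have hG : Defin L M {w : Fin 2 → M | Stc (w 0) (w 1)} := by
    have hin := dexists (dinter (dinter
      (dre (Fin.natAdd 2) hdef)
      (dEQ hlt (Fin.natAdd 2 (Fin.last n)) (Fin.castAdd (n + 1) (1 : Fin 2))))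
      (dIInter (fun i : Fin n => dAbsSubCLT hlt hadd
        (Fin.natAdd 2 i.castSucc) (c i) (Fin.castAdd (n + 1) (0 : Fin 2)))))
    convert hin using 1
    ext w
    simp only [mem_setOf_eq, mem_inter_iff, mem_iInter, Function.comp_apply,
      Fin.append_left, Fin.append_right, append_comp_natAdd]
    constructor
    · rintro ⟨x, hxS, hlast, hbox⟩
      exact ⟨x, ⟨hxS, hlast⟩, hbox⟩
    · rintro ⟨x, ⟨hxS, hlast⟩, hbox⟩
      exact ⟨x, hxS, hlast, hbox⟩
  -- definability of sections
  have hDtdef : ∀ t : M, Defin L M {p : Fin 1 → M | p 0 ∈ {u | Stc t u}} := by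
    intro t
    have h := dim ![1] (dinter hG (dEQC (0 : Fin 2) t))
    convert h using 1
    ext p
    simp only [mem_setOf_eq, mem_image, mem_inter_iff]
    constructor
    · intro hp
      refine ⟨![t, p 0], ⟨?_, ?_⟩, ?_⟩
      · simpa using hp
      · simp
      · funext i
        fin_cases i
        simp [Function.comp]
    · rintro ⟨w, ⟨hw, hw0⟩, rfl⟩
      simp only [Function.comp_apply, Matrix.cons_val_zero]
      rw [hw0] at hw
      exact hw
  have hGLB : ∀ t : M, 0 < t → ∃ m, IsGLB {u | Stc t u} m := by
    intro t ht
    refine exists_isGLB_defin hmin (hDtdef t) (f1 t ht) ⟨-r, ?_⟩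
    intro x hx
    exact (abs_le.mp (f2 t x hx)).1
  -- the set of infima
  set E : Set M := {m : M | ∃ t, 0 < t ∧ IsGLB {u | Stc t u} m} with hE
  have hLB : Defin L M {w : Fin 2 → M | ∀ u : M, Stc (w 0) u → w 1 ≤ u} := by
    have hin := dcompl (dexists (dinter
      (dre ![Fin.castAdd 1 (0 : Fin 2), Fin.natAdd 2 (0 : Fin 1)] hG)
      (dLT hlt (Fin.natAdd 2 (0 : Fin 1)) (Fin.castAdd 1 (1 : Fin 2)))))
    convert hin using 1
    ext w
    simp only [mem_setOf_eq, mem_compl_iff, mem_inter_iff, Function.comp_apply,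
      Matrix.cons_val_zero, Matrix.cons_val_one, Matrix.head_cons,
      Fin.append_left, Fin.append_right, not_exists]
    constructor
    · rintro hall x ⟨h1, h2⟩
      exact absurd (hall (x 0) h1) (not_le.mpr h2)
    · intro hnex u hu
      by_contra hl
      exact hnex (fun _ => u) ⟨hu, not_le.mp hl⟩
  have hUB : Defin L M {w : Fin 2 → M |
      ∀ b : M, (∀ u : M, Stc (w 0) u → b ≤ u) → b ≤ w 1} := by
    have hin := dcompl (dexists (dinter
      (dre ![Fin.castAdd 1 (0 : Fin 2), Fin.natAdd 2 (0 : Fin 1)] hLB)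
      (dLT hlt (Fin.castAdd 1 (1 : Fin 2)) (Fin.natAdd 2 (0 : Fin 1)))))
    convert hin using 1
    ext w
    simp only [mem_setOf_eq, mem_compl_iff, mem_inter_iff, Function.comp_apply,
      Matrix.cons_val_zero, Matrix.cons_val_one, Matrix.head_cons,
      Fin.append_left, Fin.append_right, not_exists]
    constructor
    · rintro hall x ⟨h1, h2⟩
      exact absurd (hall (x 0) h1) (not_le.mpr h2)
    · intro hnex b hb
      by_contra hl
      exact hnex (fun _ => b) ⟨hb, not_le.mp hl⟩
  have hglb_iff : ∀ t m : M, IsGLB {u | Stc t u} m ↔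
      ((∀ u : M, Stc t u → m ≤ u) ∧ ∀ b : M, (∀ u : M, Stc t u → b ≤ u) → b ≤ m) := by
    intro t m
    constructor
    · intro hg
      exact ⟨fun u hu => hg.1 hu, fun b hb => hg.2 (fun u hu => hb u hu)⟩
    · intro hg
      exact ⟨fun u hu => hg.1 u hu, fun b hb => hg.2 b (fun u hu => hb hu)⟩
  have hEdef : Defin L M {p : Fin 1 → M | p 0 ∈ E} := by
    have hin := dim ![1] (dinter (dCLT hlt (0 : M) (0 : Fin 2)) (dinter hLB hUB))
    convert hin using 1
    ext p
    simp only [mem_setOf_eq, mem_image, mem_inter_iff, hE]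
    constructor
    · rintro ⟨t, ht, hglb⟩
      rw [hglb_iff] at hglb
      refine ⟨![t, p 0], ⟨by simpa using ht, ?_, ?_⟩, ?_⟩
      · simpa using hglb.1
      · simpa using hglb.2
      · funext i
        fin_cases i
        simp [Function.comp]
    · rintro ⟨w, ⟨hw0, hw1, hw2⟩, rfl⟩
      refine ⟨w 0, by simpa using hw0, ?_⟩
      rw [hglb_iff]
      exact ⟨by simpa using hw1, by simpa using hw2⟩
  have hEne : E.Nonempty := by
    obtain ⟨m, hm⟩ := hGLB 1 one_pos
    exact ⟨m, 1, one_pos, hm⟩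
  have hEbd : ∃ b, ∀ x ∈ E, x ≤ b := by
    refine ⟨r, ?_⟩
    rintro m ⟨t, ht, hglb⟩
    obtain ⟨u, hu⟩ := f1 t ht
    exact le_trans (hglb.1 hu) (abs_le.mp (f2 t u hu)).2
  obtain ⟨xs, hxs⟩ := exists_isLUB_defin hmin hEdef hEne hEbd
  -- the limit point
  have hmem : Fin.snoc c xs ∈ closure S := by
    rw [mem_closure_iff_mbox]
    intro ε hε
    have h1 : ∃ m ∈ E, xs - ε / 2 < m := by
      by_contra hcon
      push_neg at hcon
      have : xs ≤ xs - ε / 2 := hxs.2 (fun a ha => hcon a ha)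
      linarith
    obtain ⟨m, ⟨t1, ht1, hglb1⟩, hm⟩ := h1
    set t := min t1 (ε / 2) with htdef
    have ht : 0 < t := lt_min ht1 (by linarith)
    obtain ⟨g, hg⟩ := hGLB t ht
    have hmg : m ≤ g := hg.2 (fun u hu => hglb1.1 (f3 t t1 u (min_le_left _ _) hu))
    have hgxs : g ≤ xs := hxs.1 ⟨t, ht, hg⟩
    have h2 : ∃ u, Stc t u ∧ u < g + ε / 2 := by
      by_contra hcon
      push_neg at hcon
      have : g + ε / 2 ≤ g := hg.2 (fun u hu => hcon u hu)
      linarith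
    obtain ⟨u, hu, huup⟩ := h2
    have hglo : g ≤ u := hg.1 hu
    obtain ⟨x, hxS, hxlast, hxbox⟩ := hu
    refine ⟨x, hxS, ?_⟩
    intro i
    refine Fin.lastCases ?_ ?_ i
    · rw [Fin.snoc_last, hxlast, abs_sub_lt_iff]
      constructor <;> linarith
    · intro j
      rw [Fin.snoc_castSucc]
      have h3 := hxbox j
      have h4 : t ≤ ε / 2 := min_le_right _ _
      calc |x j.castSucc - c j| < t := h3
        _ ≤ ε := by linarith
  exact ⟨Fin.snoc c xs, hcl.closure_subset hmem, by
    funext i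
    simp⟩

end KTCore
section KTChain

set_option linter.unusedSectionVars false

variable {L : FirstOrder.Language} {M : Type} [L.Structure M] [Field M] [LinearOrder M] [IsStrictOrderedRing M]
  [TopologicalSpace M] [OrderTopology M]

/-- definable, closed and bounded -/
def DCB (L : FirstOrder.Language) (M : Type) [L.Structure M] [Field M] [LinearOrder M] [IsStrictOrderedRing M]
    [TopologicalSpace M] {n : ℕ} (S : Set (Fin n → M)) : Prop :=
  Defin L M S ∧ IsClosed S ∧ ∃ r, ∀ p ∈ S, ∀ i, |p i| ≤ r

lemma dcb_drop (hmin : IsOMin L M) (hfld : ExpandsField L M) {n : ℕ}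
    {S : Set (Fin (n + 1) → M)} (hS : DCB L M S) :
    DCB L M ((fun p : Fin (n + 1) → M => p ∘ Fin.castSucc) '' S) := by
  obtain ⟨hdef, hcl, r, hbd⟩ := hS
  refine ⟨dim Fin.castSucc hdef, kt_drop_last hmin hfld hdef hcl hbd, r, ?_⟩
  rintro p ⟨x, hxS, rfl⟩ i
  exact hbd x hxS _

lemma dcb_castAdd (hmin : IsOMin L M) (hfld : ExpandsField L M) {n : ℕ} (m : ℕ)
    {S : Set (Fin (n + m) → M)} (hS : DCB L M S) :
    DCB L M ((fun p : Fin (n + m) → M => p ∘ Fin.castAdd m) '' S) := by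
  induction m with
  | zero =>
    have hfun : (fun p : Fin (n + 0) → M => p ∘ Fin.castAdd 0) = fun p => p := by
      funext p
      funext i
      rfl
    rw [hfun, Set.image_id']
    exact hS
  | succ m ih =>
    have h1 : DCB L M ((fun p : Fin ((n + m) + 1) → M => p ∘ Fin.castSucc) '' S) :=
      dcb_drop hmin hfld hS
    have h2 := ih h1
    rw [Set.image_image] at h2
    convert h2 using 2
    funext i
    rfl

lemma dcb_equiv {n m : ℕ} (e : Fin m ≃ Fin n) {S : Set (Fin n → M)} (hS : DCB L M S) :
    DCB L M ((fun p : Fin n → M => p ∘ e) '' S) := by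
  obtain ⟨hdef, hcl, r, hbd⟩ := hS
  have himg : (fun p : Fin n → M => p ∘ e) '' S =
      (fun q : Fin m → M => q ∘ e.symm) ⁻¹' S := by
    ext q
    constructor
    · rintro ⟨p, hp, rfl⟩
      show (p ∘ ⇑e) ∘ ⇑e.symm ∈ S
      have : (p ∘ ⇑e) ∘ ⇑e.symm = p := by
        funext i
        simp
      rwa [this]
    · intro hq
      refine ⟨q ∘ e.symm, hq, ?_⟩
      funext i
      simp
  refine ⟨dim (⇑e) hdef, ?_, r, ?_⟩
  · rw [himg]
    exact hcl.preimage (continuous_pi fun i => continuous_apply _)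
  · rintro p ⟨x, hxS, rfl⟩ i
    exact hbd x hxS _

lemma dcb_natAdd (hmin : IsOMin L M) (hfld : ExpandsField L M) {k h : ℕ}
    {S : Set (Fin (k + h) → M)} (hS : DCB L M S) :
    DCB L M ((fun p : Fin (k + h) → M => p ∘ Fin.natAdd k) '' S) := by
  have h1 := dcb_equiv (finAddFlip : Fin (h + k) ≃ Fin (k + h)) hS
  have h2 := dcb_castAdd hmin hfld k h1
  rw [Set.image_image] at h2
  have hfun : (fun p : Fin (k + h) → M => (p ∘ ⇑(finAddFlip : Fin (h + k) ≃ Fin (k + h))) ∘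
      Fin.castAdd k) = fun p => p ∘ Fin.natAdd k := by
    funext p
    funext i
    simp [Function.comp, finAddFlip_apply_castAdd]
  rwa [hfun] at h2

lemma dcb_coord (hmin : IsOMin L M) (hfld : ExpandsField L M) {n : ℕ} (j : Fin n)
    {S : Set (Fin n → M)} (hS : DCB L M S) :
    DCB L M ((fun p : Fin n → M => p ∘ (fun _ : Fin 1 => j)) '' S) := by
  have hn0 : 0 < n := j.pos
  have hn : 1 + (n - 1) = n := by omega
  set e1 : Fin (1 + (n - 1)) ≃ Fin n := finCongr hn with he1
  set τ : Fin (1 + (n - 1)) ≃ Fin n :=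
    e1.trans (Equiv.swap (e1 (Fin.castAdd (n - 1) 0)) j) with hτ
  have h1 := dcb_equiv τ hS
  have h2 := dcb_castAdd hmin hfld (n - 1) h1
  rw [Set.image_image] at h2
  have hfun : (fun p : Fin n → M => (p ∘ ⇑τ) ∘ Fin.castAdd (n - 1)) =
      fun p => p ∘ (fun _ : Fin 1 => j) := by
    funext p
    funext i
    have hi : i = 0 := Subsingleton.elim i 0
    subst hi
    simp only [Function.comp_apply, hτ, Equiv.trans_apply]
    rw [Equiv.swap_apply_left]
  rwa [hfun] at h2

/-- the coordinate image of a DCB set, as a subset of M -/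
lemma dcb_coord_setM (hmin : IsOMin L M) (hfld : ExpandsField L M) {n : ℕ} (j : Fin n)
    {S : Set (Fin n → M)} (hS : DCB L M S) :
    IsClosed {u : M | ∃ p ∈ S, p j = u} ∧
      Defin L M {q : Fin 1 → M | q 0 ∈ {u : M | ∃ p ∈ S, p j = u}} := by
  obtain ⟨hdef, hcl, r, hbd⟩ := dcb_coord hmin hfld j hS
  set T := (fun p : Fin n → M => p ∘ (fun _ : Fin 1 => j)) '' S with hT
  have himg : {u : M | ∃ p ∈ S, p j = u} = (fun q : Fin 1 → M => q 0) '' T := by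
    ext u
    constructor
    · rintro ⟨p, hp, rfl⟩
      exact ⟨p ∘ (fun _ : Fin 1 => j), ⟨p, hp, rfl⟩, rfl⟩
    · rintro ⟨q, ⟨p, hp, rfl⟩, rfl⟩
      exact ⟨p, hp, rfl⟩
  have hTq : {q : Fin 1 → M | q 0 ∈ {u : M | ∃ p ∈ S, p j = u}} = T := by
    ext q
    rw [himg]
    constructor
    · rintro ⟨q', hq', heq⟩
      have : q' = q := by
        funext i
        have hi : i = 0 := Subsingleton.elim i 0
        rw [hi]
        exact heq
      rwa [← this]
    · intro hq
      exact ⟨q, hq, rfl⟩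
  constructor
  · rw [himg]
    have hmap : (fun q : Fin 1 → M => q 0) = ⇑(Homeomorph.funUnique (Fin 1) M) := rfl
    rw [hmap]
    exact (Homeomorph.funUnique (Fin 1) M).isClosedMap _ hcl
  · rw [hTq]
    exact hdef

end KTChain
section ClosureDef

set_option linter.unusedSectionVars false

variable {L : FirstOrder.Language} {M : Type} [L.Structure M] [Field M] [LinearOrder M] [IsStrictOrderedRing M]
  [TopologicalSpace M] [OrderTopology M]

lemma dclosure (hlt : Defin L M {p : Fin 2 → M | p 0 < p 1})
    (hadd : Defin L M {p : Fin 3 → M | p 0 + p 1 = p 2}) {n : ℕ}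
    {S : Set (Fin n → M)} (hS : Defin L M S) : Defin L M (closure S) := by
  have hInner : Defin L M ({v : Fin ((n + 1) + n) → M | v ∘ Fin.natAdd (n + 1) ∈ S} ∩
      ⋂ i : Fin n, {v : Fin ((n + 1) + n) → M |
        |v (Fin.natAdd (n + 1) i) - v (Fin.castAdd n (Fin.castAdd 1 i))| <
          v (Fin.castAdd n (Fin.natAdd n (0 : Fin 1)))}) :=
    dinter (dre (Fin.natAdd (n + 1)) hS)
      (dIInter fun i => dAbsSubLT hlt hadd (Fin.natAdd (n + 1) i)
        (Fin.castAdd n (Fin.castAdd 1 i)) (Fin.castAdd n (Fin.natAdd n (0 : Fin 1))))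
  have hEx := dexists hInner
  have hfin := dcompl (dexists (dinter
    (dCLT hlt (0 : M) (Fin.natAdd n (0 : Fin 1))) (dcompl hEx)))
  convert hfin using 1
  ext p
  constructor
  · intro hp
    intro hcon
    obtain ⟨tb, hcon1, hcon2⟩ := hcon
    have htb : 0 < tb 0 := by
      simpa [Fin.append_right] using hcon1
    obtain ⟨q, hqS, hq⟩ := mem_closure_iff_mbox.mp hp (tb 0) htb
    apply hcon2
    refine ⟨q, ?_, ?_⟩
    · show Fin.append (Fin.append p tb) q ∘ Fin.natAdd (n + 1) ∈ S
      rwa [append_comp_natAdd]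
    · simp only [mem_iInter, mem_setOf_eq, Fin.append_right, Fin.append_left]
      exact hq
  · intro hp
    rw [mem_closure_iff_mbox]
    intro ε hε
    by_contra hne
    push_neg at hne
    apply hp
    refine ⟨fun _ => ε, ?_, ?_⟩
    · show (0 : M) < Fin.append p (fun _ => ε) (Fin.natAdd n (0 : Fin 1))
      simpa [Fin.append_right] using hε
    · rintro ⟨x, hx1, hx2⟩
      have hx1' : x ∈ S := by
        simp only [mem_setOf_eq, append_comp_natAdd] at hx1
        exact hx1
      obtain ⟨i, hi⟩ := hne x hx1'
      have := mem_iInter.mp hx2 i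
      simp only [mem_setOf_eq, Fin.append_right, Fin.append_left] at this
      exact absurd this (not_lt.mpr hi)

lemma dcb_closure (hmin : IsOMin L M) (hfld : ExpandsField L M) {n : ℕ}
    {S : Set (Fin n → M)} (hS : Defin L M S) {r : M}
    (hbd : ∀ p ∈ S, ∀ i, |p i| ≤ r) : DCB L M (closure S) :=
  ⟨dclosure hmin.1 hfld.1 hS, isClosed_closure, r, bdd_closure hbd⟩

/-- algebra facts for the compression map -/
lemma psi_abs {w x : M} (hrel : w * (1 + |x|) = x) : |w| * (1 + |x|) = |x| := by
  have h1 : (0 : M) < 1 + |x| := by positivity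
  calc |w| * (1 + |x|) = |w| * abs (1 + |x|) := by rw [abs_of_pos h1]
    _ = abs (w * (1 + |x|)) := (abs_mul _ _).symm
    _ = |x| := by rw [hrel]

lemma psi_bound1 {w x cb : M} (hrel : w * (1 + |x|) = x) (hx : |x| ≤ cb) :
    |w| ≤ cb / (1 + cb) := by
  have habs := psi_abs hrel
  have h2 : (0 : M) ≤ cb := le_trans (abs_nonneg x) hx
  have h3 : (0 : M) < 1 + cb := by linarith
  have hw1 : |w| ≤ 1 := by nlinarith [abs_nonneg x, abs_nonneg w]
  rw [le_div_iff₀ h3]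
  nlinarith [mul_nonneg (sub_nonneg.mpr hw1) (sub_nonneg.mpr hx)]

lemma psi_lt_one {w x cb : M} (hrel : w * (1 + |x|) = x) (hx : |x| ≤ cb) :
    |w| < 1 := by
  have habs := psi_abs hrel
  nlinarith [abs_nonneg x, abs_nonneg w]

lemma bound_from_psi {w x mj : M} (hrel : w * (1 + |x|) = x) (hw : |w| ≤ mj)
    (hm : mj < 1) : |x| ≤ mj / (1 - mj) := by
  have habs := psi_abs hrel
  have h1 : (0 : M) < 1 - mj := by linarith
  rw [le_div_iff₀ h1]
  nlinarith [abs_nonneg x, abs_nonneg w,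
    mul_le_mul_of_nonneg_right hw (by positivity : (0 : M) ≤ 1 + |x|)]

end ClosureDef
/-- Let `M` be an o-minimal expansion of a real closed field, `A ⊆ Mᵏ` definable, and
`ρ : A → C` a definable compactification of `A` (`C ⊆ Mʰ` definably compact, `ρ` a definable
homeomorphism onto its image, `ρ(A)` dense in `C`). Then `A` is locally definably compact
iff `ρ(A)` is open in `C`. -/
theorem stmt18 {L : FirstOrder.Language} {M : Type} [L.Structure M]
    [Field M] [LinearOrder M] [IsStrictOrderedRing M] [TopologicalSpace M] [OrderTopology M]
    (hmin : IsOMin L M) (hfld : ExpandsField L M)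
    {k h : ℕ} (A : Set (Fin k → M)) (hA : Defin L M A)
    (C : Set (Fin h → M)) (hC : Defin L M C) (hCcl : IsClosed C)
    (hCbd : ∃ r : M, ∀ p ∈ C, ∀ i, |p i| ≤ r)
    (ρ : (Fin k → M) → (Fin h → M))
    (hρdef : Defin L M
      {p : Fin (k + h) → M |
        ρ (fun i => p (Fin.castAdd h i)) = fun j => p (Fin.natAdd k j)})
    (hρcont : ContinuousOn ρ A) (hρinj : Set.InjOn ρ A)
    (hρopen : ∀ U : Set (Fin k → M), IsOpen U →
      ∃ V : Set (Fin h → M), IsOpen V ∧ ρ '' (U ∩ A) = V ∩ (ρ '' A))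
    (hρC : ρ '' A ⊆ C) (hdense : C ⊆ closure (ρ '' A)) :
    LocallyDefCompact L M A ↔ ∃ V : Set (Fin h → M), IsOpen V ∧ ρ '' A = V ∩ C := by
  obtain ⟨rC, hrC⟩ := hCbd
  have hlt := hmin.1
  have hadd := hfld.1
  have hmul := hfld.2
  have hgr : Defin L M {p : Fin (k + h) → M | ρ (p ∘ Fin.castAdd h) = p ∘ Fin.natAdd k} :=
    hρdef
  constructor
  · -- forward direction
    intro hLDC
    have key : ∀ a ∈ A, ∃ V0 : Set (Fin h → M), IsOpen V0 ∧ ρ a ∈ V0 ∧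
        V0 ∩ C ⊆ ρ '' A := by
      intro a ha
      obtain ⟨K, hKdef, hKA, hKcl, ⟨rK, hrK⟩, U0, hU0o, haU0, hUK⟩ := hLDC a ha
      set Sf : Set (Fin (k + h) → M) := {p | (p ∘ Fin.castAdd h) ∈ K ∧
        ρ (p ∘ Fin.castAdd h) = p ∘ Fin.natAdd k} with hSfe
      have hSfdef : Defin L M Sf := dinter (dre (Fin.castAdd h) hKdef) hgr
      have hSfbd : ∀ p ∈ Sf, ∀ i, |p i| ≤ max rK rC := by
        rintro p ⟨hpK, hpρ⟩ i
        refine Fin.addCases (fun i0 => ?_) (fun j0 => ?_) i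
        · have h1 := hrK _ hpK i0
          exact le_trans (abs_le.mpr h1) (le_max_left _ _)
        · have hmem : (p ∘ Fin.natAdd k) ∈ C := by
            rw [← hpρ]
            exact hρC ⟨_, hKA hpK, rfl⟩
          exact le_trans (hrC _ hmem j0) (le_max_right _ _)
      have hSfcl : IsClosed Sf := by
        apply isClosed_of_closure_subset
        intro p hp
        have hx : (p ∘ Fin.castAdd h) ∈ K := by
          apply hKcl.closure_subset
          rw [mem_closure_iff_mbox]
          intro ε hε
          obtain ⟨q, hqS, hq⟩ := mem_closure_iff_mbox.mp hp ε hε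
          exact ⟨q ∘ Fin.castAdd h, hqS.1, fun i => hq (Fin.castAdd h i)⟩
        refine ⟨hx, ?_⟩
        by_contra hne
        have hjj : ∃ j, ρ (p ∘ Fin.castAdd h) j ≠ p (Fin.natAdd k j) := by
          by_contra hc
          push_neg at hc
          exact hne (funext fun j => hc j)
        obtain ⟨j, hj⟩ := hjj
        set δ := |ρ (p ∘ Fin.castAdd h) j - p (Fin.natAdd k j)| / 2 with hδe
        have hδpos : 0 < δ := half_pos (abs_pos.mpr (sub_ne_zero.mpr hj))
        have hxA : (p ∘ Fin.castAdd h) ∈ A := hKA hx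
        have hcont := hρcont _ hxA
        have hpre := hcont ((mbox_isOpen (ρ (p ∘ Fin.castAdd h)) δ).mem_nhds
          (self_mem_mbox _ hδpos))
        rw [Filter.mem_map, mem_nhdsWithin] at hpre
        obtain ⟨Q, hQo, hxQ, hQsub⟩ := hpre
        obtain ⟨η, hη, hbox⟩ := exists_mbox_subset hQo hxQ
        obtain ⟨q, hqS, hq⟩ := mem_closure_iff_mbox.mp hp (min η δ) (lt_min hη hδpos)
        have hx'Q : (q ∘ Fin.castAdd h) ∈ Q :=
          hbox fun i => lt_of_lt_of_le (hq (Fin.castAdd h i)) (min_le_left _ _)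
        have hx'A : (q ∘ Fin.castAdd h) ∈ A := hKA hqS.1
        have hρq := hQsub ⟨hx'Q, hx'A⟩
        have h1 : |ρ (q ∘ Fin.castAdd h) j - ρ (p ∘ Fin.castAdd h) j| < δ := hρq j
        have h2 : |q (Fin.natAdd k j) - p (Fin.natAdd k j)| < δ :=
          lt_of_lt_of_le (hq _) (min_le_right _ _)
        have h3 : ρ (q ∘ Fin.castAdd h) j = q (Fin.natAdd k j) := congrFun hqS.2 j
        rw [h3] at h1
        have htri := abs_sub_le (ρ (p ∘ Fin.castAdd h) j) (q (Fin.natAdd k j))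
          (p (Fin.natAdd k j))
        rw [abs_sub_comm] at h1
        linarith
      have hdcb : DCB L M Sf := ⟨hSfdef, hSfcl, max rK rC, hSfbd⟩
      have himg := dcb_natAdd hmin hfld hdcb
      have himgeq : (fun p : Fin (k + h) → M => p ∘ Fin.natAdd k) '' Sf = ρ '' K := by
        ext z
        constructor
        · rintro ⟨q, ⟨hqK, hqρ⟩, rfl⟩
          exact ⟨q ∘ Fin.castAdd h, hqK, hqρ⟩
        · rintro ⟨x, hxK, rfl⟩
          refine ⟨Fin.append x (ρ x), ⟨?_, ?_⟩, append_comp_natAdd x (ρ x)⟩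
          · rw [append_comp_castAdd2]
            exact hxK
          · rw [append_comp_castAdd2, append_comp_natAdd]
      have hρKcl : IsClosed (ρ '' K) := by
        rw [← himgeq]
        exact himg.2.1
      obtain ⟨V0, hV0o, hV0eq⟩ := hρopen U0 hU0o
      refine ⟨V0, hV0o, ?_, ?_⟩
      · have hin : ρ a ∈ ρ '' (U0 ∩ A) := ⟨a, ⟨haU0, ha⟩, rfl⟩
        rw [hV0eq] at hin
        exact hin.1
      · intro z hz
        have hz1 : z ∈ closure (ρ '' A) := hdense hz.2
        have hz2 : z ∈ closure (V0 ∩ ρ '' A) := by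
          rw [mem_closure_iff] at hz1 ⊢
          intro O hOo hzO
          obtain ⟨y, hy1, hy2⟩ := hz1 (O ∩ V0) (hOo.inter hV0o) ⟨hzO, hz.1⟩
          exact ⟨y, hy1.1, hy1.2, hy2⟩
        rw [← hV0eq] at hz2
        have hsub : ρ '' (U0 ∩ A) ⊆ ρ '' K := Set.image_mono hUK
        have hz3 := (closure_mono hsub) hz2
        rw [hρKcl.closure_eq] at hz3
        exact Set.image_mono hKA hz3
    choose! Vf hVo hVmem hVsub using key
    refine ⟨⋃ a ∈ A, Vf a, isOpen_biUnion fun a ha => hVo a ha, ?_⟩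
    ext z
    constructor
    · rintro ⟨x, hx, rfl⟩
      exact ⟨Set.mem_biUnion hx (hVmem x hx), hρC ⟨x, hx, rfl⟩⟩
    · rintro ⟨hzV, hzC⟩
      obtain ⟨a, ha, hza⟩ := Set.mem_iUnion₂.mp hzV
      exact hVsub a ha ⟨hza, hzC⟩
  · -- backward direction
    rintro ⟨V, hVo, hVeq⟩ a ha
    have haV : ρ a ∈ V ∩ C := by
      rw [← hVeq]
      exact ⟨a, ha, rfl⟩
    obtain ⟨ε, hε, hboxV⟩ := exists_mbox_subset hVo haV.1
    set ε2 := ε / 2 with hε2e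
    have hε2 : 0 < ε2 := half_pos hε
    set c0 := ρ a with hc0e
    set B : Set (Fin h → M) := ⋂ i, ({y : Fin h → M | y i ≤ c0 i + ε2} ∩
      {y : Fin h → M | c0 i - ε2 ≤ y i}) with hBe
    have hBdef : Defin L M B :=
      dIInter fun i => dinter (dLEC hlt i (c0 i + ε2)) (dCLE hlt (c0 i - ε2) i)
    have hBcl : IsClosed B := by
      refine isClosed_iInter fun i => IsClosed.inter ?_ ?_
      · exact (isClosed_Iic).preimage (continuous_apply i)
      · exact (isClosed_Ici).preimage (continuous_apply i)
    have hBmem : ∀ y : Fin h → M, y ∈ B ↔ ∀ i, |y i - c0 i| ≤ ε2 := by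
      intro y
      rw [hBe, mem_iInter]
      refine forall_congr' fun i => ?_
      rw [mem_inter_iff, mem_setOf_eq, mem_setOf_eq, abs_sub_le_iff]
      constructor <;> (rintro ⟨u1, u2⟩; constructor <;> linarith)
    have hBsubV : B ⊆ V := by
      intro y hy
      apply hboxV
      intro i
      exact lt_of_le_of_lt ((hBmem y).mp hy i) (by rw [hε2e]; linarith)
    have hBCsub : B ∩ C ⊆ ρ '' A := by
      intro y hy
      rw [hVeq]
      exact ⟨hBsubV hy.1, hy.2⟩
    have haB : c0 ∈ B := (hBmem c0).mpr fun i => by simpa using le_of_lt hε2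
    -- the graph over B ∩ C
    set Sb : Set (Fin (k + h) → M) := {p | (p ∘ Fin.castAdd h) ∈ A ∧
      ρ (p ∘ Fin.castAdd h) = p ∘ Fin.natAdd k ∧ (p ∘ Fin.natAdd k) ∈ B ∧
      (p ∘ Fin.natAdd k) ∈ C} with hSbe
    have hSbdef : Defin L M Sb :=
      dinter (dre (Fin.castAdd h) hA) (dinter hgr
        (dinter (dre (Fin.natAdd k) hBdef) (dre (Fin.natAdd k) hC)))
    have hSbcl : IsClosed Sb := by
      apply isClosed_of_closure_subset
      intro p hp
      have hyB : (p ∘ Fin.natAdd k) ∈ B := by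
        apply hBcl.closure_subset
        rw [mem_closure_iff_mbox]
        intro δ hδ
        obtain ⟨q, hqS, hq⟩ := mem_closure_iff_mbox.mp hp δ hδ
        exact ⟨q ∘ Fin.natAdd k, hqS.2.2.1, fun j => hq _⟩
      have hyC : (p ∘ Fin.natAdd k) ∈ C := by
        apply hCcl.closure_subset
        rw [mem_closure_iff_mbox]
        intro δ hδ
        obtain ⟨q, hqS, hq⟩ := mem_closure_iff_mbox.mp hp δ hδ
        exact ⟨q ∘ Fin.natAdd k, hqS.2.2.2, fun j => hq _⟩
      obtain ⟨x', hx'A, hx'ρ⟩ := hBCsub ⟨hyB, hyC⟩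
      have hxx : (p ∘ Fin.castAdd h) = x' := by
        by_contra hne
        have hjj : ∃ j, p (Fin.castAdd h j) ≠ x' j := by
          by_contra hc
          push_neg at hc
          exact hne (funext fun j => hc j)
        obtain ⟨j, hj⟩ := hjj
        set δ1 := |p (Fin.castAdd h j) - x' j| / 2 with hδ1e
        have hδ1 : 0 < δ1 := half_pos (abs_pos.mpr (sub_ne_zero.mpr hj))
        obtain ⟨W, hWo, hWeq⟩ := hρopen (mbox x' δ1) (mbox_isOpen x' δ1)
        have hyW : (p ∘ Fin.natAdd k) ∈ W := by
          have hin : (p ∘ Fin.natAdd k) ∈ ρ '' (mbox x' δ1 ∩ A) :=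
            ⟨x', ⟨self_mem_mbox x' hδ1, hx'A⟩, hx'ρ⟩
          rw [hWeq] at hin
          exact hin.1
        obtain ⟨δ2, hδ2, hWbox⟩ := exists_mbox_subset hWo hyW
        obtain ⟨q, hqS, hq⟩ := mem_closure_iff_mbox.mp hp (min δ1 δ2) (lt_min hδ1 hδ2)
        have hρqW : ρ (q ∘ Fin.castAdd h) ∈ W := by
          rw [hqS.2.1]
          apply hWbox
          intro j'
          exact lt_of_lt_of_le (hq (Fin.natAdd k j')) (min_le_right _ _)
        have hin2 : ρ (q ∘ Fin.castAdd h) ∈ ρ '' (mbox x' δ1 ∩ A) := by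
          rw [hWeq]
          exact ⟨hρqW, ⟨_, hqS.1, rfl⟩⟩
        obtain ⟨x'', ⟨hx''box, hx''A⟩, hx''eq⟩ := hin2
        have hxq : (q ∘ Fin.castAdd h) = x'' := hρinj hqS.1 hx''A hx''eq.symm
        have h1 : |q (Fin.castAdd h j) - x' j| < δ1 := by
          rw [show q (Fin.castAdd h j) = x'' j from congrFun hxq j]
          exact hx''box j
        have h2 : |q (Fin.castAdd h j) - p (Fin.castAdd h j)| < δ1 :=
          lt_of_lt_of_le (hq _) (min_le_left _ _)
        have htri := abs_sub_le (p (Fin.castAdd h j)) (q (Fin.castAdd h j)) (x' j)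
        rw [abs_sub_comm] at h2
        linarith
      exact ⟨hxx ▸ hx'A, hxx ▸ hx'ρ, hyB, hyC⟩
    -- K
    set K : Set (Fin k → M) := {x | x ∈ A ∧ ρ x ∈ B ∧ ρ x ∈ C} with hKe
    have hKprojeq : (fun p : Fin (k + h) → M => p ∘ Fin.castAdd h) '' Sb = K := by
      ext x
      constructor
      · rintro ⟨q, ⟨hqA, hqρ, hqB, hqC⟩, rfl⟩
        exact ⟨hqA, by rw [hqρ]; exact hqB, by rw [hqρ]; exact hqC⟩
      · rintro ⟨hxA, hxB, hxC⟩
        refine ⟨Fin.append x (ρ x), ⟨?_, ?_, ?_, ?_⟩, append_comp_castAdd2 x (ρ x)⟩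
        · rw [append_comp_castAdd2]
          exact hxA
        · rw [append_comp_castAdd2, append_comp_natAdd]
        · rw [append_comp_natAdd]
          exact hxB
        · rw [append_comp_natAdd]
          exact hxC
    have haK : a ∈ K := ⟨ha, by rw [← hc0e]; exact haB, hρC ⟨a, ha, rfl⟩⟩
    -- the compressed set S'
    set S' : Set (Fin (k + h) → M) := {w | ∃ x : Fin k → M,
      Fin.append x (w ∘ Fin.natAdd k) ∈ Sb ∧
      ∀ i : Fin k, w (Fin.castAdd h i) * (1 + |x i|) = x i} with hS'e
    have hgq : ∀ (w : Fin (k + h) → M) (x : Fin k → M),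
        (Fin.append w x) ∘ (Fin.append (fun i : Fin k => Fin.natAdd (k + h) i)
          (fun j : Fin h => Fin.castAdd k (Fin.natAdd k j)) : Fin (k + h) → Fin ((k + h) + k))
          = Fin.append x (w ∘ Fin.natAdd k) := by
      intro w x
      funext l
      refine Fin.addCases (fun i => ?_) (fun j => ?_) l
      · show Fin.append w x (Fin.append _ _ (Fin.castAdd h i)) = _
        rw [Fin.append_left, Fin.append_left, Fin.append_right]
      · show Fin.append w x (Fin.append _ _ (Fin.natAdd k j)) = _
        rw [Fin.append_right, Fin.append_left, Fin.append_right]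
        rfl
    have hS'def : Defin L M S' := by
      have hinner := dinter (dre (Fin.append (fun i : Fin k => Fin.natAdd (k + h) i)
          (fun j : Fin h => Fin.castAdd k (Fin.natAdd k j))) hSbdef)
        (dIInter fun i : Fin k => dPsiRel hlt hadd hmul
          (Fin.castAdd k (Fin.castAdd h i)) (Fin.natAdd (k + h) i))
      have hex := dexists hinner
      convert hex using 1
      ext w
      constructor
      · rintro ⟨x, hx1, hx2⟩
        refine ⟨x, ?_, ?_⟩
        · show (Fin.append w x) ∘ _ ∈ Sb
          rw [hgq]
          exact hx1
        · simp only [mem_iInter, mem_setOf_eq, Fin.append_left, Fin.append_right]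
          exact hx2
      · rintro ⟨x, hc1, hc2⟩
        refine ⟨x, ?_, ?_⟩
        · have hc1' : (Fin.append w x) ∘ (Fin.append (fun i : Fin k => Fin.natAdd (k + h) i)
              (fun j : Fin h => Fin.castAdd k (Fin.natAdd k j))) ∈ Sb := hc1
          rwa [hgq] at hc1'
        · intro i
          have hi := mem_iInter.mp hc2 i
          simpa only [mem_setOf_eq, Fin.append_left, Fin.append_right] using hi
      -- done
    have hS'bd : ∀ w ∈ S', ∀ l, |w l| ≤ max 1 rC := by
      rintro w ⟨x, hxSb, hψ⟩ l
      refine Fin.addCases (fun i => ?_) (fun j => ?_) l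
      · exact le_trans (le_of_lt (psi_lt_one (hψ i) (le_refl _))) (le_max_left _ _)
      · have hyC : (w ∘ Fin.natAdd k) ∈ C := by
          have hc := hxSb.2.2.2
          rwa [append_comp_natAdd] at hc
        exact le_trans (hrC _ hyC j) (le_max_right _ _)
    have hdcbS' : DCB L M (closure S') := dcb_closure hmin hfld hS'def hS'bd
    -- closure points of S' have compressed coordinates strictly inside (-1,1)
    have hclS' : ∀ p ∈ closure S', ∀ j : Fin k, ∃ b : M, b < 1 ∧
        |p (Fin.castAdd h j)| ≤ b := by
      intro p hp j
      have hyB : (p ∘ Fin.natAdd k) ∈ B := by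
        apply hBcl.closure_subset
        rw [mem_closure_iff_mbox]
        intro δ hδ
        obtain ⟨q, hqS', hq⟩ := mem_closure_iff_mbox.mp hp δ hδ
        obtain ⟨x, hxSb, -⟩ := hqS'
        have hc := hxSb.2.2.1
        rw [append_comp_natAdd] at hc
        exact ⟨q ∘ Fin.natAdd k, hc, fun j' => hq _⟩
      have hyC : (p ∘ Fin.natAdd k) ∈ C := by
        apply hCcl.closure_subset
        rw [mem_closure_iff_mbox]
        intro δ hδ
        obtain ⟨q, hqS', hq⟩ := mem_closure_iff_mbox.mp hp δ hδ
        obtain ⟨x, hxSb, -⟩ := hqS'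
        have hc := hxSb.2.2.2
        rw [append_comp_natAdd] at hc
        exact ⟨q ∘ Fin.natAdd k, hc, fun j' => hq _⟩
      obtain ⟨x', hx'A, hx'ρ⟩ := hBCsub ⟨hyB, hyC⟩
      obtain ⟨W, hWo, hWeq⟩ := hρopen (mbox x' 1) (mbox_isOpen x' 1)
      have hyW : (p ∘ Fin.natAdd k) ∈ W := by
        have hin : (p ∘ Fin.natAdd k) ∈ ρ '' (mbox x' 1 ∩ A) :=
          ⟨x', ⟨self_mem_mbox x' one_pos, hx'A⟩, hx'ρ⟩
        rw [hWeq] at hin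
        exact hin.1
      obtain ⟨δ2, hδ2, hWbox⟩ := exists_mbox_subset hWo hyW
      set cb := |x' j| + 1 with hcbe
      have hcbpos : 0 < cb := by positivity
      refine ⟨cb / (1 + cb), by rw [div_lt_one (by linarith)]; linarith, ?_⟩
      by_contra hgt
      push_neg at hgt
      set εx := min (|p (Fin.castAdd h j)| - cb / (1 + cb)) δ2 with hεxe
      have hεx : 0 < εx := lt_min (by linarith) hδ2
      obtain ⟨q, hqS', hq⟩ := mem_closure_iff_mbox.mp hp εx hεx
      obtain ⟨x, hxSb, hψ⟩ := hqS'
      have hρx : ρ x = q ∘ Fin.natAdd k := by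
        have hc := hxSb.2.1
        rwa [append_comp_castAdd2, append_comp_natAdd] at hc
      have hxA : x ∈ A := by
        have hc := hxSb.1
        rwa [append_comp_castAdd2] at hc
      have hxW : ρ x ∈ W := by
        rw [hρx]
        apply hWbox
        intro j'
        exact lt_of_lt_of_le (hq (Fin.natAdd k j')) (min_le_right _ _)
      have hin2 : ρ x ∈ ρ '' (mbox x' 1 ∩ A) := by
        rw [hWeq]
        exact ⟨hxW, x, hxA, rfl⟩
      obtain ⟨x'', ⟨hx''box, hx''A⟩, hx''eq⟩ := hin2
      have hxeq : x = x'' := hρinj hxA hx''A hx''eq.symm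
      have hxj : |x j| ≤ cb := by
        have hb := hx''box j
        rw [← hxeq] at hb
        have habs : |x j| - |x' j| ≤ |x j - x' j| := abs_sub_abs_le_abs_sub _ _
        rw [hcbe]
        linarith
      have hwb : |q (Fin.castAdd h j)| ≤ cb / (1 + cb) := psi_bound1 (hψ j) hxj
      have h5 := hq (Fin.castAdd h j)
      have h6 : εx ≤ |p (Fin.castAdd h j)| - cb / (1 + cb) := min_le_left _ _
      have habs2 : |p (Fin.castAdd h j)| - |q (Fin.castAdd h j)| ≤
        |p (Fin.castAdd h j) - q (Fin.castAdd h j)| := abs_sub_abs_le_abs_sub _ _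
      rw [abs_sub_comm] at h5
      linarith
    -- membership of the compressed point of any x ∈ K in S'
    have hwmem : ∀ x ∈ K, Fin.append (fun i => x i / (1 + |x i|)) (ρ x) ∈ S' := by
      rintro x ⟨hxA, hxB, hxC⟩
      refine ⟨x, ?_, ?_⟩
      · rw [append_comp_natAdd]
        refine ⟨?_, ?_, ?_, ?_⟩
        · rw [append_comp_castAdd2]
          exact hxA
        · rw [append_comp_castAdd2, append_comp_natAdd]
        · rw [append_comp_natAdd]
          exact hxB
        · rw [append_comp_natAdd]
          exact hxC
      · intro i
        rw [Fin.append_left]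
        exact div_mul_cancel₀ _ (by positivity)
    -- boundedness of K
    have hKbd : ∃ rKb : M, ∀ x ∈ K, ∀ j, |x j| ≤ rKb := by
      have hperj : ∀ j : Fin k, ∃ mj : M, mj < 1 ∧
          ∀ x ∈ K, |x j / (1 + |x j|)| ≤ mj := by
        intro j
        obtain ⟨hZcl, hZdef⟩ := dcb_coord_setM hmin hfld (Fin.castAdd h j) hdcbS'
        set Z := {u : M | ∃ p ∈ closure S', p (Fin.castAdd h j) = u} with hZe
        have hZne : Z.Nonempty :=
          ⟨_, _, subset_closure (hwmem a haK), rfl⟩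
        obtain ⟨rS, hrS⟩ := hdcbS'.2.2
        obtain ⟨ms, hms⟩ := exists_isLUB_defin hmin hZdef hZne
          ⟨rS, by rintro u ⟨p, hp, rfl⟩; exact (abs_le.mp (hrS p hp _)).2⟩
        obtain ⟨mi, hmi⟩ := exists_isGLB_defin hmin hZdef hZne
          ⟨-rS, by rintro u ⟨p, hp, rfl⟩; exact (abs_le.mp (hrS p hp _)).1⟩
        have hmsZ : ms ∈ Z := by
          have hcl := hms.mem_closure hZne
          rwa [hZcl.closure_eq] at hcl
        have hmiZ : mi ∈ Z := by
          have hcl := hmi.mem_closure hZne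
          rwa [hZcl.closure_eq] at hcl
        obtain ⟨ps, hps, hpse⟩ := hmsZ
        obtain ⟨bs, hbs1, hbs2⟩ := hclS' ps hps j
        obtain ⟨pi, hpi, hpie⟩ := hmiZ
        obtain ⟨bi, hbi1, hbi2⟩ := hclS' pi hpi j
        have hms1 : ms < 1 := by
          rw [← hpse]
          exact lt_of_le_of_lt (le_abs_self _) (lt_of_le_of_lt hbs2 hbs1)
        have hmi1 : -1 < mi := by
          rw [← hpie]
          have := neg_abs_le (pi (Fin.castAdd h j))
          have h7 : |pi (Fin.castAdd h j)| < 1 := lt_of_le_of_lt hbi2 hbi1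
          linarith
        refine ⟨max ms (-mi), max_lt hms1 (by linarith), ?_⟩
        intro x hx
        have hu : (x j / (1 + |x j|)) ∈ Z :=
          ⟨_, subset_closure (hwmem x hx), Fin.append_left _ _ j⟩
        have h1 := hms.1 hu
        have h2 := hmi.1 hu
        rw [abs_le]
        constructor
        · have h8 : -mi ≤ max ms (-mi) := le_max_right _ _
          linarith
        · exact le_trans h1 (le_max_left _ _)
      choose! mjf hmj1 hmj2 using hperj
      have hfin : (Set.range fun j : Fin k => mjf j / (1 - mjf j)).Finite :=
        Set.finite_range _
      obtain ⟨rKb, hrKb⟩ := hfin.bddAbove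
      refine ⟨rKb, ?_⟩
      intro x hx j
      have hψrel : (x j / (1 + |x j|)) * (1 + |x j|) = x j :=
        div_mul_cancel₀ _ (by positivity)
      have hb := bound_from_psi hψrel (hmj2 j x hx) (hmj1 j)
      exact le_trans hb (hrKb (Set.mem_range_self j))
    obtain ⟨rKb, hrKbd⟩ := hKbd
    -- Sb is DCB
    have hSbbd : ∀ p ∈ Sb, ∀ l, |p l| ≤ max rKb rC := by
      rintro p ⟨hpA, hpρ, hpB, hpC⟩ l
      refine Fin.addCases (fun i => ?_) (fun j => ?_) l
      · have hpK : (p ∘ Fin.castAdd h) ∈ K :=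
          ⟨hpA, by rw [hpρ]; exact hpB, by rw [hpρ]; exact hpC⟩
        exact le_trans (hrKbd _ hpK i) (le_max_left _ _)
      · exact le_trans (hrC _ hpC j) (le_max_right _ _)
    have hdcbSb : DCB L M Sb := ⟨hSbdef, hSbcl, max rKb rC, hSbbd⟩
    have hKproj := dcb_castAdd hmin hfld h hdcbSb
    rw [hKprojeq] at hKproj
    refine ⟨K, hKproj.1, fun x hx => hx.1, hKproj.2.1, ?_, ?_⟩
    · obtain ⟨r', hr'⟩ := hKproj.2.2
      exact ⟨r', fun p hp i => abs_le.mp (hr' p hp i)⟩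
    · obtain ⟨U, hUo, hUeq⟩ := continuousOn_iff'.mp hρcont (mbox c0 ε2)
        (mbox_isOpen c0 ε2)
      refine ⟨U, hUo, ?_, ?_⟩
      · have hain : a ∈ ρ ⁻¹' (mbox c0 ε2) ∩ A := by
          refine ⟨?_, ha⟩
          show ρ a ∈ mbox c0 ε2
          rw [← hc0e]
          exact self_mem_mbox c0 hε2
        rw [hUeq] at hain
        exact hain.1
      · intro x hx
        rw [← hUeq] at hx
        refine ⟨hx.2, ?_, hρC ⟨x, hx.2, rfl⟩⟩
        exact (hBmem _).mpr fun i => le_of_lt (hx.1 i)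
end

section
/- Let M be an o-minimal expansion of a real closed field, A ⊆ M^k definably compact, f : A → B definable continuous, x ∈ Sp(A), and y ∈ Sp(B) with y ≤ Sp(f)(x) in the specialization order. Then there exists z ∈ Sp(A) with z ≤ x and Sp(f)(z) = y; moreover if y < Sp(f)(x) then z < x. -/
open FirstOrder Set Classical

/-- A point of the o-minimal spectrum `Sp A`: a complete type over `M` concentrated on `A`,
presented as an ultrafilter on the Boolean algebra of definable subsets of `A`. -/
structure OType (L : FirstOrder.Language) (M : Type) [L.Structure M] {k : ℕ}
    (A : Set (Fin k → M)) where
  sets : Set (Set (Fin k → M))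
  definable_mem : ∀ s ∈ sets, Defin L M s
  subset_mem : ∀ s ∈ sets, s ⊆ A
  top_mem : A ∈ sets
  nonempty_mem : ∀ s ∈ sets, s.Nonempty
  inter_mem : ∀ s ∈ sets, ∀ t ∈ sets, s ∩ t ∈ sets
  complete : ∀ s : Set (Fin k → M), Defin L M s → s ⊆ A → (s ∈ sets ∨ A \ s ∈ sets)

/-- The spectral topology on `Sp A`, generated by the sets `Sp U` for `U` open definable. -/
instance OType.topology (L : FirstOrder.Language) (M : Type) [L.Structure M] [TopologicalSpace M]
    {k : ℕ} (A : Set (Fin k → M)) : TopologicalSpace (OType L M A) :=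
  TopologicalSpace.generateFrom
    {V | ∃ U : Set (Fin k → M), IsOpen U ∧ Defin L M U ∧
      V = {x : OType L M A | U ∩ A ∈ x.sets}}

/-- The dimension of a type: the minimal dimension of a definable set on which it concentrates. -/
noncomputable def OType.tdim {L : FirstOrder.Language} {M : Type} [L.Structure M]
    [TopologicalSpace M] {k : ℕ} {A : Set (Fin k → M)} (x : OType L M A) : ℤ :=
  sInf {d : ℤ | ∃ s ∈ x.sets, odim s = d}

/-- `F` is the map `Sp f : Sp A → Sp B` induced by the definable map `f : A → B`
(pushforward of types: `t ∈ Sp f (x)` iff `f⁻¹(t) ∈ x`). -/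
def IsSpecMap (L : FirstOrder.Language) (M : Type) [L.Structure M] {k h : ℕ}
    (A : Set (Fin k → M)) (B : Set (Fin h → M)) (f : (Fin k → M) → (Fin h → M))
    (F : OType L M A → OType L M B) : Prop :=
  ∀ (x : OType L M A) (t : Set (Fin h → M)),
    t ∈ (F x).sets ↔ (Defin L M t ∧ t ⊆ B ∧ A ∩ f ⁻¹' t ∈ x.sets)


set_option linter.unusedSectionVars false
set_option maxHeartbeats 1000000
section Toolkit
variable {L : FirstOrder.Language} {M : Type} [L.Structure M]

theorem Defin.inter {m : ℕ} {s t : Set (Fin m → M)} (hs : Defin L M s) (ht : Defin L M t) :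
    Defin L M (s ∩ t) := Set.Definable.inter hs ht

theorem Defin.compl {m : ℕ} {s : Set (Fin m → M)} (hs : Defin L M s) :
    Defin L M sᶜ := Set.Definable.compl hs

theorem defin_univ {m : ℕ} : Defin L M (univ : Set (Fin m → M)) := Set.definable_univ

theorem Defin.iInter {m n : ℕ} {s : Fin n → Set (Fin m → M)} (hs : ∀ i, Defin L M (s i)) :
    Defin L M (⋂ i, s i) := by
  have : Defin L M _ := Set.definable_biInter_finset (A := (univ : Set M)) hs Finset.univ
  convert this using 1
  simp

theorem defin_eq_const (c : M) {m : ℕ} (i : Fin m) : Defin L M {p : Fin m → M | p i = c} := by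
  refine ⟨FirstOrder.Language.Term.equal (FirstOrder.Language.Term.var i)
    ((L.con (⟨c, mem_univ c⟩ : (univ : Set M))).term), ?_⟩
  ext p
  simp [FirstOrder.Language.Formula.realize_equal, FirstOrder.Language.Term.realize_con]

theorem defin_cyl {m n : ℕ} {s : Set (Fin m → M)} (h : Defin L M s) (f : Fin m → Fin n) :
    Defin L M {p : Fin n → M | p ∘ f ∈ s} := Set.Definable.preimage_comp f h

theorem defin_proj1 {m : ℕ} {s : Set (Fin (m+1) → M)} (h : Defin L M s) :
    Defin L M {p : Fin m → M | ∃ v : M, Fin.snoc p v ∈ s} := by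
  have : Defin L M _ := Set.Definable.image_comp h (Fin.castSucc (n := m))
  convert this using 1
  ext p
  constructor
  · rintro ⟨v, hv⟩
    exact ⟨Fin.snoc p v, hv, by funext i; simp⟩
  · rintro ⟨q, hq, rfl⟩
    refine ⟨q (Fin.last m), ?_⟩
    convert hq using 1
    funext i
    refine Fin.lastCases ?_ ?_ i <;> simp

theorem defin_lt [LinearOrder M] (hlt : Defin L M {p : Fin 2 → M | p 0 < p 1}) {m : ℕ} (i j : Fin m) :
    Defin L M {p : Fin m → M | p i < p j} := by
  exact defin_cyl hlt ![i, j]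

theorem defin_le [LinearOrder M] (hlt : Defin L M {p : Fin 2 → M | p 0 < p 1}) {m : ℕ}
    (i j : Fin m) : Defin L M {p : Fin m → M | p i ≤ p j} := by
  have := (defin_lt hlt j i).compl
  convert this using 1
  ext p
  simp [not_lt]

theorem defin_add3 [Add M] (hadd : Defin L M {p : Fin 3 → M | p 0 + p 1 = p 2}) {m : ℕ}
    (i j l : Fin m) : Defin L M {p : Fin m → M | p i + p j = p l} := by
  exact defin_cyl hadd ![i, j, l]

end Toolkit

section Rel
variable {L : FirstOrder.Language} {M : Type} [L.Structure M] [Field M] [LinearOrder M] [IsStrictOrderedRing M]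
variable (hlt : Defin L M {p : Fin 2 → M | p 0 < p 1})
variable (hadd : Defin L M {p : Fin 3 → M | p 0 + p 1 = p 2})
set_option linter.unusedSectionVars false
include hlt hadd

theorem defin_le_add3 {m : ℕ} (i j l : Fin m) :
    Defin L M {p : Fin m → M | p i ≤ p j + p l} := by
  have h1 := (defin_add3 hadd j.castSucc l.castSucc (Fin.last m)).inter
    (defin_le hlt i.castSucc (Fin.last m))
  have := defin_proj1 h1
  convert this using 1
  ext p
  simp only [mem_setOf_eq, mem_inter_iff, Fin.snoc_castSucc, Fin.snoc_last]
  constructor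
  · intro h; exact ⟨p j + p l, rfl, h⟩
  · rintro ⟨v, rfl, h⟩; exact h

theorem defin_le_addc {m : ℕ} (i j : Fin m) (c : M) :
    Defin L M {p : Fin m → M | p i ≤ p j + c} := by
  have h1 := (defin_eq_const c (Fin.last m)).inter
    (defin_le_add3 hlt hadd i.castSucc j.castSucc (Fin.last m))
  have := defin_proj1 h1
  convert this using 1
  ext p
  simp only [mem_setOf_eq, mem_inter_iff, Fin.snoc_castSucc, Fin.snoc_last]
  constructor
  · intro h; exact ⟨c, rfl, h⟩
  · rintro ⟨v, rfl, h⟩; exact h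

theorem defin_c_le_add {m : ℕ} (c : M) (i j : Fin m) :
    Defin L M {p : Fin m → M | c ≤ p i + p j} := by
  have h1 := (defin_eq_const c (Fin.last m)).inter
    (defin_le_add3 hlt hadd (Fin.last m) i.castSucc j.castSucc)
  have := defin_proj1 h1
  convert this using 1
  ext p
  simp only [mem_setOf_eq, mem_inter_iff, Fin.snoc_castSucc, Fin.snoc_last]
  constructor
  · intro h; exact ⟨c, rfl, h⟩
  · rintro ⟨v, rfl, h⟩; exact h

theorem defin_lt_c {m : ℕ} (i : Fin m) (c : M) :
    Defin L M {p : Fin m → M | p i < c} := by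
  have h1 := (defin_eq_const c (Fin.last m)).inter (defin_lt hlt i.castSucc (Fin.last m))
  have := defin_proj1 h1
  convert this using 1
  ext p
  simp only [mem_setOf_eq, mem_inter_iff, Fin.snoc_castSucc, Fin.snoc_last]
  constructor
  · intro h; exact ⟨c, rfl, h⟩
  · rintro ⟨v, rfl, h⟩; exact h

theorem defin_c_lt {m : ℕ} (c : M) (i : Fin m) :
    Defin L M {p : Fin m → M | c < p i} := by
  have h1 := (defin_eq_const c (Fin.last m)).inter (defin_lt hlt (Fin.last m) i.castSucc)
  have := defin_proj1 h1
  convert this using 1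
  ext p
  simp only [mem_setOf_eq, mem_inter_iff, Fin.snoc_castSucc, Fin.snoc_last]
  constructor
  · intro h; exact ⟨c, rfl, h⟩
  · rintro ⟨v, rfl, h⟩; exact h

theorem defin_le_c {m : ℕ} (i : Fin m) (c : M) :
    Defin L M {p : Fin m → M | p i ≤ c} := by
  have := (defin_c_lt hlt hadd c i).compl
  convert this using 1
  ext p
  simp [not_lt]

theorem defin_c_le {m : ℕ} (c : M) (i : Fin m) :
    Defin L M {p : Fin m → M | c ≤ p i} := by
  have := (defin_lt_c hlt hadd i c).compl
  convert this using 1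
  ext p
  simp [not_lt]

end Rel

section Top
variable {M : Type} [Field M] [LinearOrder M] [IsStrictOrderedRing M] [TopologicalSpace M] [OrderTopology M]

theorem exists_pos_le_all {k : ℕ} (ε : Fin k → M) (h : ∀ i, 0 < ε i) :
    ∃ δ > (0:M), ∀ i, δ ≤ ε i := by
  cases isEmpty_or_nonempty (Fin k) with
  | inl hk => exact ⟨1, one_pos, fun i => isEmptyElim i⟩
  | inr hk =>
    refine ⟨Finset.univ.inf' ⟨hk.some, Finset.mem_univ _⟩ ε, ?_, fun i => Finset.inf'_le _ (Finset.mem_univ i)⟩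
    exact (Finset.lt_inf'_iff _).mpr fun i _ => h i

theorem mem_closure_box {k : ℕ} {S : Set (Fin k → M)} {q : Fin k → M} :
    q ∈ closure S ↔ ∀ ε > (0:M), ∃ p ∈ S, ∀ i, |q i - p i| < ε := by
  constructor
  · intro h ε hε
    rw [mem_closure_iff] at h
    obtain ⟨p, hpo, hpS⟩ := h (univ.pi fun i => Ioo (q i - ε) (q i + ε))
      (isOpen_set_pi finite_univ fun i _ => isOpen_Ioo)
      (by
        rw [mem_univ_pi]
        intro i
        constructor
        · linarith
        · linarith)
    rw [mem_univ_pi] at hpo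
    refine ⟨p, hpS, fun i => ?_⟩
    have h1 := (hpo i).1
    have h2 := (hpo i).2
    rw [abs_sub_lt_iff]
    constructor <;> linarith
  · intro h
    rw [mem_closure_iff]
    intro o ho hq
    obtain ⟨I, u, hIu, hsub⟩ := isOpen_pi_iff.1 ho q hq
    have hchoice : ∀ i : Fin k, ∃ e : M, 0 < e ∧
        (i ∈ I → ∀ y : M, |q i - y| < e → y ∈ u i) := by
      intro i
      by_cases hi : i ∈ I
      · obtain ⟨l, r, hqlr, hsub'⟩ := mem_nhds_iff_exists_Ioo_subset.1
          ((hIu i hi).1.mem_nhds (hIu i hi).2)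
        refine ⟨min (q i - l) (r - q i), ?_, fun _ y hy => hsub' ?_⟩
        · rw [lt_min_iff]
          exact ⟨by linarith [hqlr.1], by linarith [hqlr.2]⟩
        · rw [abs_sub_lt_iff, lt_min_iff, lt_min_iff] at hy
          constructor
          · linarith [hy.2.1]
          · linarith [hy.1.2]
      · exact ⟨1, one_pos, fun hi' => absurd hi' hi⟩
    choose e he1 he2 using hchoice
    obtain ⟨δ, hδ, hδle⟩ := exists_pos_le_all e he1
    obtain ⟨p, hpS, hp⟩ := h δ hδ
    refine ⟨p, hsub ?_, hpS⟩
    intro i hi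
    exact he2 i hi (p i) (lt_of_lt_of_le (hp i) (hδle i))

theorem mem_closure_box_le {k : ℕ} {S : Set (Fin k → M)} {q : Fin k → M}
    (h : ∀ ε > (0:M), ∃ p ∈ S, ∀ i, |q i - p i| ≤ ε) : q ∈ closure S := by
  rw [mem_closure_box]
  intro ε hε
  obtain ⟨p, hpS, hp⟩ := h (ε/2) (by linarith)
  exact ⟨p, hpS, fun i => lt_of_le_of_lt (hp i) (by linarith)⟩

end Top

section Dim1
variable {M : Type} [Field M] [LinearOrder M] [IsStrictOrderedRing M]

/-- property: nonempty bdd-below sets have a glb that is approximated from above -/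
def HasInfApprox (X : Set M) : Prop :=
  X.Nonempty → BddBelow X → ∃ c, c ∈ lowerBounds X ∧ ∀ δ > (0:M), ∃ z ∈ X, z < c + δ

theorem hia_empty : HasInfApprox (∅ : Set M) := fun h _ => absurd h (by simp [Set.not_nonempty_empty])

theorem hia_union {X Y : Set M} (hX : HasInfApprox X) (hY : HasInfApprox Y) :
    HasInfApprox (X ∪ Y) := by
  intro hne hbdd
  rcases X.eq_empty_or_nonempty with hXe | hXne
  · rw [hXe, empty_union] at hne hbdd ⊢
    exact hY hne hbdd
  rcases Y.eq_empty_or_nonempty with hYe | hYne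
  · rw [hYe, union_empty] at hne hbdd ⊢
    exact hX hXne hbdd
  obtain ⟨cX, hcX, haX⟩ := hX hXne (hbdd.mono subset_union_left)
  obtain ⟨cY, hcY, haY⟩ := hY hYne (hbdd.mono subset_union_right)
  rcases le_total cX cY with hle | hle
  · refine ⟨cX, ?_, fun δ hδ => ?_⟩
    · rintro t (ht | ht)
      · exact hcX ht
      · exact le_trans hle (hcY ht)
    · obtain ⟨z, hz, hz'⟩ := haX δ hδ
      exact ⟨z, Or.inl hz, hz'⟩
  · refine ⟨cY, ?_, fun δ hδ => ?_⟩
    · rintro t (ht | ht)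
      · exact le_trans hle (hcX ht)
      · exact hcY ht
    · obtain ⟨z, hz, hz'⟩ := haY δ hδ
      exact ⟨z, Or.inr hz, hz'⟩

theorem hia_singleton (a : M) : HasInfApprox ({a} : Set M) := by
  intro _ _
  refine ⟨a, fun t ht => ?_, fun δ hδ => ⟨a, rfl, by linarith⟩⟩
  simp only [mem_singleton_iff] at ht
  exact le_of_eq ht.symm

theorem hia_Ioo (a b : M) : HasInfApprox (Ioo a b) := by
  rintro ⟨w, hw1, hw2⟩ _
  refine ⟨a, fun t ht => le_of_lt ht.1, fun δ hδ => ?_⟩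
  obtain ⟨z, hz1, hz2⟩ := exists_between (lt_min (lt_of_lt_of_le (lt_add_of_pos_right a hδ) le_rfl) hw1 : a < min (a + δ) w)
  rw [lt_min_iff] at hz2
  exact ⟨z, ⟨hz1, lt_trans hz2.2 hw2⟩, hz2.1⟩

theorem hia_Ioi (a : M) : HasInfApprox (Ioi a) := by
  intro _ _
  refine ⟨a, fun t ht => le_of_lt ht, fun δ hδ => ?_⟩
  obtain ⟨z, hz1, hz2⟩ := exists_between (lt_add_of_pos_right a hδ)
  exact ⟨z, hz1, hz2⟩

theorem hia_Iio (b : M) : HasInfApprox (Iio b) := fun _ hbdd => absurd hbdd (not_bddBelow_Iio b)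

theorem hia_univ : HasInfApprox (univ : Set M) := by
  rintro _ ⟨l, hl⟩
  have := hl (mem_univ (l - 1))
  linarith

theorem hia_interval {J : Set M}
    (h : (∃ a b, J = Ioo a b) ∨ (∃ a, J = Ioi a) ∨ (∃ b, J = Iio b) ∨ J = univ) :
    HasInfApprox J := by
  rcases h with ⟨a, b, rfl⟩ | ⟨a, rfl⟩ | ⟨b, rfl⟩ | rfl
  · exact hia_Ioo a b
  · exact hia_Ioi a
  · exact hia_Iio b
  · exact hia_univ

theorem hia_iUnion {n : ℕ} {J : Fin n → Set M} (h : ∀ i, HasInfApprox (J i)) :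
    HasInfApprox (⋃ i, J i) := by
  induction n with
  | zero => simpa [Set.iUnion_of_empty] using hia_empty
  | succ n ih =>
    have : (⋃ i, J i) = J 0 ∪ ⋃ i : Fin n, J i.succ := by
      ext t
      simp only [mem_iUnion, mem_union]
      exact Fin.exists_fin_succ
    rw [this]
    exact hia_union (h 0) (ih fun i => h i.succ)

theorem hia_finset (F : Finset M) : HasInfApprox (F : Set M) := by
  classical
  induction F using Finset.induction_on with
  | empty => simpa using hia_empty
  | insert _ _ hx ih =>
    rw [Finset.coe_insert, Set.insert_eq]
    exact hia_union (hia_singleton _) ih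

end Dim1

section OminDim1
variable {L : FirstOrder.Language} {M : Type} [L.Structure M] [Field M] [LinearOrder M] [IsStrictOrderedRing M]

theorem omin_inf_approx
    (homin : ∀ s : Set (Fin 1 → M), Defin L M s →
      ∃ (F : Finset M) (n : ℕ) (J : Fin n → Set M),
        (∀ i, (∃ a b, J i = Set.Ioo a b) ∨ (∃ a, J i = Set.Ioi a) ∨
              (∃ b, J i = Set.Iio b) ∨ J i = Set.univ) ∧
        (fun p : Fin 1 → M => p 0) '' s = ↑F ∪ ⋃ i, J i)
    {s : Set (Fin 1 → M)} (hs : Defin L M s) :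
    HasInfApprox ((fun p : Fin 1 → M => p 0) '' s) := by
  obtain ⟨F, n, J, hJ, hEq⟩ := homin s hs
  rw [hEq]
  exact hia_union (hia_finset F) (hia_iUnion fun i => hia_interval (hJ i))

theorem omin_cut
    (homin : ∀ s : Set (Fin 1 → M), Defin L M s →
      ∃ (F : Finset M) (n : ℕ) (J : Fin n → Set M),
        (∀ i, (∃ a b, J i = Set.Ioo a b) ∨ (∃ a, J i = Set.Ioi a) ∨
              (∃ b, J i = Set.Iio b) ∨ J i = Set.univ) ∧
        (fun p : Fin 1 → M => p 0) '' s = ↑F ∪ ⋃ i, J i)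
    {s : Set (Fin 1 → M)} (hs : Defin L M s)
    (hup : ∀ t ∈ (fun p : Fin 1 → M => p 0) '' s, ∀ t', t ≤ t' →
      t' ∈ (fun p : Fin 1 → M => p 0) '' s)
    {t₀ t₁ : M} (h₀ : t₀ ∉ (fun p : Fin 1 → M => p 0) '' s)
    (h₁ : t₁ ∈ (fun p : Fin 1 → M => p 0) '' s) :
    ∃ c, (∀ t ∈ (fun p : Fin 1 → M => p 0) '' s, c ≤ t) ∧
      (∀ t, c < t → t ∈ (fun p : Fin 1 → M => p 0) '' s) := by
  set Z := (fun p : Fin 1 → M => p 0) '' s with hZ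
  have hbdd : BddBelow Z := by
    refine ⟨t₀, fun z hz => ?_⟩
    by_contra hlt
    exact h₀ (hup z hz t₀ (le_of_lt (lt_of_not_ge hlt)))
  obtain ⟨c, hlb, happ⟩ := omin_inf_approx homin hs ⟨t₁, h₁⟩ hbdd
  refine ⟨c, fun t ht => hlb ht, fun t ht => ?_⟩
  obtain ⟨z, hz, hz'⟩ := happ (t - c) (by linarith)
  exact hup z hz t (by linarith)

end OminDim1

section Proj
variable {L : FirstOrder.Language} {M : Type} [L.Structure M] [Field M] [LinearOrder M] [IsStrictOrderedRing M]
  [TopologicalSpace M] [OrderTopology M]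

theorem proj_closed
    (hlt : Defin L M {p : Fin 2 → M | p 0 < p 1})
    (hadd : Defin L M {p : Fin 3 → M | p 0 + p 1 = p 2})
    (homin : ∀ s : Set (Fin 1 → M), Defin L M s →
      ∃ (F : Finset M) (n : ℕ) (J : Fin n → Set M),
        (∀ i, (∃ a b, J i = Set.Ioo a b) ∨ (∃ a, J i = Set.Ioi a) ∨
              (∃ b, J i = Set.Iio b) ∨ J i = Set.univ) ∧
        (fun p : Fin 1 → M => p 0) '' s = ↑F ∪ ⋃ i, J i)
    {n : ℕ} {S : Set (Fin (n+1) → M)}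
    (hS : Defin L M S) (hScl : IsClosed S) {r : M} (hSbd : ∀ p ∈ S, ∀ i, |p i| ≤ r) :
    IsClosed ((fun p : Fin (n+1) → M => p ∘ Fin.castSucc) '' S) := by
  rw [← closure_subset_iff_isClosed]
  intro b hb
  -- the defining predicate
  set P : M → M → Prop := fun ε t => ∃ p ∈ S,
    (∀ i : Fin n, |p i.castSucc - b i| ≤ ε) ∧ p (Fin.last n) ≤ t with hP
  set Z : Set M := {t | ∀ ε > (0:M), P ε t} with hZdef
  -- index bookkeeping
  set emb : Fin (n+1) → Fin (n+3) := fun i => i.castSucc.castSucc with hemb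
  set εidx : Fin (n+3) := (Fin.last (n+1)).castSucc with hεidx
  set tidx : Fin (n+3) := Fin.last (n+2) with htidx
  -- the inner definable set
  set Inner : Set (Fin (n+3) → M) :=
    {q : Fin (n+3) → M | q ∘ emb ∈ S}
    ∩ (⋂ i : Fin n, ({q : Fin (n+3) → M | q (emb i.castSucc) ≤ q εidx + b i}
        ∩ {q : Fin (n+3) → M | b i ≤ q (emb i.castSucc) + q εidx}))
    ∩ {q : Fin (n+3) → M | q (emb (Fin.last n)) ≤ q tidx} with hInner
  have hInnerDef : Defin L M Inner :=
    ((defin_cyl hS emb).inter (Defin.iInter fun i =>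
      (defin_le_addc hlt hadd _ _ _).inter (defin_c_le_add hlt hadd _ _ _))).inter
      (defin_le hlt _ _)
  have hInnerMem : ∀ q : Fin (n+3) → M, q ∈ Inner ↔
      (q ∘ emb ∈ S ∧ (∀ i : Fin n, |(q ∘ emb) i.castSucc - b i| ≤ q εidx)
        ∧ (q ∘ emb) (Fin.last n) ≤ q tidx) := by
    intro q
    simp only [hInner, mem_inter_iff, mem_iInter, mem_setOf_eq, Function.comp_apply]
    constructor
    · rintro ⟨⟨h1, h2⟩, h3⟩
      refine ⟨h1, fun i => ?_, h3⟩
      rw [abs_sub_le_iff]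
      obtain ⟨ha, hb'⟩ := h2 i
      exact ⟨by linarith, by linarith⟩
    · rintro ⟨h1, h2, h3⟩
      refine ⟨⟨h1, fun i => ?_⟩, h3⟩
      have := h2 i
      rw [abs_sub_le_iff] at this
      exact ⟨by linarith [this.1], by linarith [this.2]⟩
  -- Near : pairs (ε, t) such that P ε t
  have hNear : Defin L M {x : Fin 2 → M | P (x 0) (x 1)} := by
    have himg : Defin L M _ := Set.Definable.image_comp hInnerDef (![εidx, tidx] : Fin 2 → Fin (n+3))
    convert himg using 1
    ext x
    simp only [mem_setOf_eq, mem_image]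
    constructor
    · rintro ⟨p, hpS, hnear, hle⟩
      refine ⟨Fin.snoc (Fin.snoc p (x 0)) (x 1), ?_, ?_⟩
      · rw [hInnerMem]
        have hqe : (Fin.snoc (Fin.snoc p (x 0)) (x 1) : Fin (n+3) → M) ∘ emb = p := by
          funext i
          simp [hemb, Fin.snoc_castSucc]
        have hqε : (Fin.snoc (Fin.snoc p (x 0)) (x 1) : Fin (n+3) → M) εidx = x 0 := by
          simp [hεidx, Fin.snoc_castSucc, Fin.snoc_last]
        have hqt : (Fin.snoc (Fin.snoc p (x 0)) (x 1) : Fin (n+3) → M) tidx = x 1 := by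
          simp [htidx, Fin.snoc_last]
        rw [hqe, hqε, hqt]
        exact ⟨hpS, hnear, hle⟩
      · funext j
        fin_cases j <;>
          simp [hεidx, htidx, Fin.snoc_castSucc, Fin.snoc_last]
    · rintro ⟨q, hq, rfl⟩
      rw [hInnerMem] at hq
      refine ⟨q ∘ emb, hq.1, ?_, ?_⟩
      · intro i
        have := hq.2.1 i
        simpa using this
      · simpa using hq.2.2
  -- Z as definable subset of (Fin 1 → M)
  have hZ1 : Defin L M {y : Fin 1 → M | y 0 ∈ Z} := by
    have hbadT := ((defin_c_lt hlt hadd (0:M) (0 : Fin 2)).inter hNear.compl).image_comp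
      (![1] : Fin 1 → Fin 2)
    have : Defin L M _ := hbadT.compl
    convert this using 1
    ext y
    simp only [hZdef, mem_setOf_eq, mem_compl_iff, mem_image, mem_inter_iff]
    constructor
    · rintro hy ⟨x, ⟨hx0, hxP⟩, hxy⟩
      apply hxP
      have hx1 : x 1 = y 0 := by simpa using congrFun hxy 0
      show P (x 0) (x 1)
      rw [hx1]
      exact hy (x 0) (by simpa using hx0)
    · intro hy ε hε
      by_contra hP'
      exact hy ⟨![ε, y 0], ⟨by simpa using hε, by simpa using hP'⟩, by
        funext j; fin_cases j; simp⟩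
  have hZimg : (fun p : Fin 1 → M => p 0) '' {y : Fin 1 → M | y 0 ∈ Z} = Z := by
    ext t
    simp only [mem_image, mem_setOf_eq]
    constructor
    · rintro ⟨y, hy, rfl⟩; exact hy
    · intro ht; exact ⟨fun _ => t, ht, rfl⟩
  -- upward closure, endpoints
  have hup : ∀ t ∈ Z, ∀ t', t ≤ t' → t' ∈ Z := by
    intro t ht t' htt' ε hε
    obtain ⟨p, hpS, h1, h2⟩ := ht ε hε
    exact ⟨p, hpS, h1, le_trans h2 htt'⟩
  have ht₀ : -(r+1) ∉ Z := by
    intro hmem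
    obtain ⟨p, hpS, _, hle⟩ := hmem 1 one_pos
    have := hSbd p hpS (Fin.last n)
    have := neg_abs_le (p (Fin.last n))
    linarith [abs_nonneg (p (Fin.last n))]
  have ht₁ : r ∈ Z := by
    intro ε hε
    rw [mem_closure_box] at hb
    obtain ⟨p', hp', hclose⟩ := hb ε hε
    obtain ⟨p, hpS, rfl⟩ := hp'
    refine ⟨p, hpS, fun i => ?_, ?_⟩
    · rw [abs_sub_comm]
      exact le_of_lt (hclose i)
    · exact le_trans (le_abs_self _) (hSbd p hpS (Fin.last n))
  -- the cut point
  have hcut := omin_cut homin hZ1 (by rw [hZimg]; exact hup)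
    (by rw [hZimg]; exact ht₀) (by rw [hZimg]; exact ht₁)
  rw [hZimg] at hcut
  obtain ⟨c, hlb, hgt⟩ := hcut
  -- the limit point
  have hqstar : (Fin.snoc b c : Fin (n+1) → M) ∈ S := by
    rw [← hScl.closure_eq]
    apply mem_closure_box_le
    intro ε hε
    have hcε : c - ε ∉ Z := by
      intro hmem
      have := hlb _ hmem
      linarith
    rw [hZdef, mem_setOf_eq] at hcε
    push_neg at hcε
    obtain ⟨ε', hε', hnP⟩ := hcε
    have hcεZ : c + ε ∈ Z := hgt _ (by linarith)
    obtain ⟨p, hpS, hnear, hle⟩ := hcεZ (min ε ε') (lt_min hε hε')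
    have hnear' : ∀ i : Fin n, |p i.castSucc - b i| ≤ ε' :=
      fun i => le_trans (hnear i) (min_le_right _ _)
    have hplast : ¬ p (Fin.last n) ≤ c - ε := by
      intro hcontra
      exact absurd ⟨p, hpS, hnear', hcontra⟩ hnP
    push_neg at hplast
    refine ⟨p, hpS, fun i => ?_⟩
    refine Fin.lastCases ?_ ?_ i
    · rw [Fin.snoc_last, abs_sub_le_iff]
      exact ⟨by linarith, by linarith⟩
    · intro j
      rw [Fin.snoc_castSucc, abs_sub_comm]
      exact le_trans (hnear j) (min_le_left _ _)
  exact ⟨Fin.snoc b c, hqstar, by funext i; simp [Fin.snoc_castSucc]⟩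

end Proj

section Iter
variable {L : FirstOrder.Language} {M : Type} [L.Structure M] [Field M] [LinearOrder M] [IsStrictOrderedRing M]
  [TopologicalSpace M] [OrderTopology M]

theorem exists_ge_all {k : ℕ} (v : Fin k → M) : ∃ r, ∀ i, v i ≤ r := by
  cases isEmpty_or_nonempty (Fin k) with
  | inl hk => exact ⟨0, fun i => isEmptyElim i⟩
  | inr hk => exact ⟨Finset.univ.sup' ⟨hk.some, Finset.mem_univ _⟩ v,
      fun i => Finset.le_sup' _ (Finset.mem_univ i)⟩

theorem iter_proj
    (hlt : Defin L M {p : Fin 2 → M | p 0 < p 1})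
    (hadd : Defin L M {p : Fin 3 → M | p 0 + p 1 = p 2})
    (homin : ∀ s : Set (Fin 1 → M), Defin L M s →
      ∃ (F : Finset M) (n : ℕ) (J : Fin n → Set M),
        (∀ i, (∃ a b, J i = Set.Ioo a b) ∨ (∃ a, J i = Set.Ioi a) ∨
              (∃ b, J i = Set.Iio b) ∨ J i = Set.univ) ∧
        (fun p : Fin 1 → M => p 0) '' s = ↑F ∪ ⋃ i, J i) :
    ∀ (kk : ℕ) {n : ℕ} (S : Set (Fin (n + kk) → M)), Defin L M S → IsClosed S →
      ∀ r : M, (∀ p ∈ S, ∀ i, |p i| ≤ r) →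
      IsClosed ((fun p : Fin (n + kk) → M => p ∘ Fin.castAdd kk) '' S) := by
  intro kk
  induction kk with
  | zero =>
    intro n S hS hScl r hSbd
    have heq : (fun p : Fin (n + 0) → M => p ∘ Fin.castAdd 0) = fun p => p := by
      funext p
      funext i
      exact congrArg p (Fin.ext rfl)
    rw [heq, image_id']
    exact hScl
  | succ kk ih =>
    intro n S hS hScl r hSbd
    -- first drop the last coordinate
    have h1 : IsClosed ((fun p : Fin ((n + kk) + 1) → M => p ∘ Fin.castSucc) '' S) :=
      proj_closed hlt hadd homin hS hScl hSbd
    have h1def : Defin L M ((fun p : Fin ((n + kk) + 1) → M => p ∘ Fin.castSucc) '' S) :=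
      Set.Definable.image_comp hS _
    have h1bd : ∀ q ∈ ((fun p : Fin ((n + kk) + 1) → M => p ∘ Fin.castSucc) '' S),
        ∀ i, |q i| ≤ r := by
      rintro q ⟨p, hp, rfl⟩ i
      exact hSbd p hp _
    have h2 := ih _ h1def h1 r h1bd
    have heq : (fun p : Fin (n + kk) → M => p ∘ Fin.castAdd kk) ''
        ((fun p : Fin ((n + kk) + 1) → M => p ∘ Fin.castSucc) '' S)
        = (fun p : Fin (n + (kk+1)) → M => p ∘ Fin.castAdd (kk+1)) '' S := by
      rw [← image_comp]
      apply image_congr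
      intro p _
      funext i
      exact congrArg p (Fin.ext rfl)
    rwa [heq] at h2

end Iter

section Graph
variable {L : FirstOrder.Language} {M : Type} [L.Structure M] [Field M] [LinearOrder M] [IsStrictOrderedRing M]
  [TopologicalSpace M] [OrderTopology M]
variable {k h : ℕ} {f : (Fin k → M) → (Fin h → M)}

theorem defin_pre
    (hfdef : Defin L M
      {p : Fin (k + h) → M |
        f (fun i => p (Fin.castAdd h i)) = fun j => p (Fin.natAdd k j)})
    {S : Set (Fin k → M)} (hS : Defin L M S) {t : Set (Fin h → M)} (ht : Defin L M t) :
    Defin L M (S ∩ f ⁻¹' t) := by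
  have hE : Defin L M
      ({p : Fin (k + h) → M |
          f (fun i => p (Fin.castAdd h i)) = fun j => p (Fin.natAdd k j)}
        ∩ {p : Fin (k + h) → M | p ∘ Fin.castAdd h ∈ S}
        ∩ {p : Fin (k + h) → M | p ∘ Fin.natAdd k ∈ t}) :=
    (hfdef.inter (defin_cyl hS _)).inter (defin_cyl ht _)
  have : Defin L M _ := Set.Definable.image_comp hE (Fin.castAdd h)
  convert this using 1
  ext q
  simp only [mem_inter_iff, mem_image, mem_setOf_eq, mem_preimage]
  constructor
  · rintro ⟨hqS, hqt⟩
    refine ⟨Fin.append q (f q), ⟨⟨?_, ?_⟩, ?_⟩, ?_⟩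
    · have h1 : (fun i => Fin.append q (f q) (Fin.castAdd h i)) = q := by
        funext i; rw [Fin.append_left]
      have h2 : (fun j => Fin.append q (f q) (Fin.natAdd k j)) = f q := by
        funext j; rw [Fin.append_right]
      rw [h1, h2]
    · show Fin.append q (f q) ∘ Fin.castAdd h ∈ S
      have : Fin.append q (f q) ∘ Fin.castAdd h = q := by
        funext i; exact Fin.append_left _ _ i
      rwa [this]
    · show Fin.append q (f q) ∘ Fin.natAdd k ∈ t
      have : Fin.append q (f q) ∘ Fin.natAdd k = f q := by
        funext j; exact Fin.append_right _ _ j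
      rwa [this]
    · funext i; exact Fin.append_left _ _ i
  · rintro ⟨p, ⟨⟨hpf, hpS⟩, hpt⟩, rfl⟩
    have hcast : (fun i => p (Fin.castAdd h i)) = p ∘ Fin.castAdd h := rfl
    constructor
    · exact hpS
    · show f (p ∘ Fin.castAdd h) ∈ t
      rw [← hcast, hpf]
      exact hpt

theorem defin_img
    (hfdef : Defin L M
      {p : Fin (k + h) → M |
        f (fun i => p (Fin.castAdd h i)) = fun j => p (Fin.natAdd k j)})
    {S : Set (Fin k → M)} (hS : Defin L M S) : Defin L M (f '' S) := by
  have hE : Defin L M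
      ({p : Fin (k + h) → M |
          f (fun i => p (Fin.castAdd h i)) = fun j => p (Fin.natAdd k j)}
        ∩ {p : Fin (k + h) → M | p ∘ Fin.castAdd h ∈ S}) :=
    hfdef.inter (defin_cyl hS _)
  have : Defin L M _ := Set.Definable.image_comp hE (Fin.natAdd k)
  convert this using 1
  ext q
  simp only [mem_image, mem_inter_iff, mem_setOf_eq]
  constructor
  · rintro ⟨p, hpS, rfl⟩
    refine ⟨Fin.append p (f p), ⟨?_, ?_⟩, ?_⟩
    · have h1 : (fun i => Fin.append p (f p) (Fin.castAdd h i)) = p := by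
        funext i; rw [Fin.append_left]
      have h2 : (fun j => Fin.append p (f p) (Fin.natAdd k j)) = f p := by
        funext j; rw [Fin.append_right]
      rw [h1, h2]
    · show Fin.append p (f p) ∘ Fin.castAdd h ∈ S
      have : Fin.append p (f p) ∘ Fin.castAdd h = p := by
        funext i; exact Fin.append_left _ _ i
      rwa [this]
    · funext j; exact Fin.append_right _ _ j
  · rintro ⟨p, ⟨hpf, hpS⟩, rfl⟩
    refine ⟨p ∘ Fin.castAdd h, hpS, ?_⟩
    show f (fun i => p (Fin.castAdd h i)) = p ∘ Fin.natAdd k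
    rw [hpf]
    rfl

end Graph

section ImageClosed
variable {L : FirstOrder.Language} {M : Type} [L.Structure M] [Field M] [LinearOrder M] [IsStrictOrderedRing M]
  [TopologicalSpace M] [OrderTopology M]
variable {k h : ℕ} {f : (Fin k → M) → (Fin h → M)}

theorem graph_isClosed {S : Set (Fin k → M)} (hScl : IsClosed S)
    (hcont : ContinuousOn f S) :
    IsClosed {x : Fin (h+k) → M | (fun i => x (Fin.natAdd h i)) ∈ S ∧
      (fun j => x (Fin.castAdd k j)) = f (fun i => x (Fin.natAdd h i))} := by
  rw [← isOpen_compl_iff]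
  rw [isOpen_iff_forall_mem_open]
  intro x hx
  have htailcont : Continuous (fun y : Fin (h+k) → M => (fun i => y (Fin.natAdd h i))) :=
    continuous_pi fun i => continuous_apply _
  by_cases htail : (fun i => x (Fin.natAdd h i)) ∈ S
  · -- head ≠ f tail
    have hhead : (fun j => x (Fin.castAdd k j)) ≠ f (fun i => x (Fin.natAdd h i)) := by
      intro hcontra
      exact hx ⟨htail, hcontra⟩
    have hj : ∃ j, x (Fin.castAdd k j) ≠ f (fun i => x (Fin.natAdd h i)) j := by
      by_contra hcontra
      push_neg at hcontra
      exact hhead (funext hcontra)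
    obtain ⟨j, hj⟩ := hj
    obtain ⟨V, W, hV, hW, hxV, hfW, hVW⟩ := t2_separation hj
    have hjcont : ContinuousOn (fun p => f p j) S :=
      (continuous_apply j).comp_continuousOn hcont
    have hWnhds : (fun p => f p j) ⁻¹' W ∈ nhdsWithin (fun i => x (Fin.natAdd h i)) S :=
      hjcont _ htail (hW.mem_nhds hfW)
    rw [mem_nhdsWithin] at hWnhds
    obtain ⟨U, hU, hxU, hUsub⟩ := hWnhds
    refine ⟨(fun y : Fin (h+k) → M => y (Fin.castAdd k j)) ⁻¹' V ∩
      (fun y : Fin (h+k) → M => (fun i => y (Fin.natAdd h i))) ⁻¹' U, ?_, ?_, ⟨hxV, hxU⟩⟩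
    · rintro y ⟨hyV, hyU⟩ ⟨hyS, hyEq⟩
      have h1 : f (fun i => y (Fin.natAdd h i)) j ∈ W := hUsub ⟨hyU, hyS⟩
      have h2 : y (Fin.castAdd k j) ∈ V := hyV
      have h3 : y (Fin.castAdd k j) = f (fun i => y (Fin.natAdd h i)) j := congrFun hyEq j
      rw [h3] at h2
      exact (Set.disjoint_left.1 hVW h2) h1
    · exact ((continuous_apply _).isOpen_preimage V hV).inter
        (htailcont.isOpen_preimage U hU)
  · refine ⟨(fun y : Fin (h+k) → M => (fun i => y (Fin.natAdd h i))) ⁻¹' Sᶜ, ?_, ?_, htail⟩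
    · rintro y hyS ⟨hyS', _⟩
      exact hyS hyS'
    · exact htailcont.isOpen_preimage _ hScl.isOpen_compl

theorem graph_defin
    (hfdef : Defin L M
      {p : Fin (k + h) → M |
        f (fun i => p (Fin.castAdd h i)) = fun j => p (Fin.natAdd k j)})
    {S : Set (Fin k → M)} (hS : Defin L M S) :
    Defin L M {x : Fin (h+k) → M | (fun i => x (Fin.natAdd h i)) ∈ S ∧
      (fun j => x (Fin.castAdd k j)) = f (fun i => x (Fin.natAdd h i))} := by
  have hE : Defin L M
      ({p : Fin (k + h) → M |
          f (fun i => p (Fin.castAdd h i)) = fun j => p (Fin.natAdd k j)}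
        ∩ {p : Fin (k + h) → M | p ∘ Fin.castAdd h ∈ S}) :=
    hfdef.inter (defin_cyl hS _)
  have : Defin L M _ := Set.Definable.image_comp hE
    (Fin.addCases (Fin.natAdd k) (Fin.castAdd h) : Fin (h + k) → Fin (k + h))
  convert this using 1
  ext x
  simp only [mem_setOf_eq, mem_image, mem_inter_iff]
  constructor
  · rintro ⟨hxS, hxEq⟩
    set q : Fin (k + h) → M :=
      Fin.append (fun i => x (Fin.natAdd h i)) (fun j => x (Fin.castAdd k j)) with hq
    have hqc : (fun i => q (Fin.castAdd h i)) = fun i => x (Fin.natAdd h i) := by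
      funext i; exact Fin.append_left _ _ i
    have hqn : (fun j => q (Fin.natAdd k j)) = fun j => x (Fin.castAdd k j) := by
      funext j; exact Fin.append_right _ _ j
    refine ⟨q, ⟨?_, ?_⟩, ?_⟩
    · rw [hqc, hqn, hxEq]
    · show q ∘ Fin.castAdd h ∈ S
      have : q ∘ Fin.castAdd h = fun i => x (Fin.natAdd h i) := by
        funext i; exact Fin.append_left _ _ i
      rwa [this]
    · funext i
      refine Fin.addCases (fun j => ?_) (fun i' => ?_) i
      · show q (Fin.addCases (Fin.natAdd k) (Fin.castAdd h) (Fin.castAdd k j)) = _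
        rw [Fin.addCases_left]
        exact Fin.append_right _ _ j
      · show q (Fin.addCases (Fin.natAdd k) (Fin.castAdd h) (Fin.natAdd h i')) = _
        rw [Fin.addCases_right]
        exact Fin.append_left _ _ i'
  · rintro ⟨q, ⟨hqf, hqS⟩, rfl⟩
    have h1 : (fun i => (q ∘ Fin.addCases (Fin.natAdd k) (Fin.castAdd h)) (Fin.natAdd h i))
        = fun i => q (Fin.castAdd h i) := by
      funext i
      show q (Fin.addCases (Fin.natAdd k) (Fin.castAdd h) (Fin.natAdd h i)) = _
      rw [Fin.addCases_right]
    have h2 : (fun j => (q ∘ Fin.addCases (Fin.natAdd k) (Fin.castAdd h)) (Fin.castAdd k j))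
        = fun j => q (Fin.natAdd k j) := by
      funext j
      show q (Fin.addCases (Fin.natAdd k) (Fin.castAdd h) (Fin.castAdd k j)) = _
      rw [Fin.addCases_left]
    constructor
    · rw [h1]
      exact hqS
    · rw [h1, h2, hqf]

theorem image_closed
    (hlt : Defin L M {p : Fin 2 → M | p 0 < p 1})
    (hadd : Defin L M {p : Fin 3 → M | p 0 + p 1 = p 2})
    (homin : ∀ s : Set (Fin 1 → M), Defin L M s →
      ∃ (F : Finset M) (n : ℕ) (J : Fin n → Set M),
        (∀ i, (∃ a b, J i = Set.Ioo a b) ∨ (∃ a, J i = Set.Ioi a) ∨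
              (∃ b, J i = Set.Iio b) ∨ J i = Set.univ) ∧
        (fun p : Fin 1 → M => p 0) '' s = ↑F ∪ ⋃ i, J i)
    (hfdef : Defin L M
      {p : Fin (k + h) → M |
        f (fun i => p (Fin.castAdd h i)) = fun j => p (Fin.natAdd k j)})
    {S : Set (Fin k → M)} (hS : Defin L M S) (hScl : IsClosed S)
    {r : M} (hSbd : ∀ p ∈ S, ∀ i, |p i| ≤ r) (hcont : ContinuousOn f S) :
    IsClosed (f '' S) := by
  rw [← closure_subset_iff_isClosed]
  intro b hb
  -- restrict to the preimage of a box around b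
  set Box : Set (Fin h → M) :=
    ⋂ j : Fin h, ({q : Fin h → M | q j ≤ b j + 1} ∩ {q : Fin h → M | b j - 1 ≤ q j})
    with hBox
  have hBoxDef : Defin L M Box :=
    Defin.iInter fun j => (defin_le_c hlt hadd _ _).inter (defin_c_le hlt hadd _ _)
  have hBoxCl : IsClosed Box := by
    apply isClosed_iInter
    intro j
    exact ((isClosed_le (continuous_apply j) continuous_const)).inter
      (isClosed_le continuous_const (continuous_apply j))
  have hBoxMem : ∀ q : Fin h → M, q ∈ Box ↔ ∀ j, |q j - b j| ≤ 1 := by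
    intro q
    simp only [hBox, mem_iInter, mem_inter_iff, mem_setOf_eq, abs_sub_le_iff]
    constructor
    · intro hq j
      exact ⟨by linarith [(hq j).1], by linarith [(hq j).2]⟩
    · intro hq j
      exact ⟨by linarith [(hq j).1], by linarith [(hq j).2]⟩
  set S' : Set (Fin k → M) := S ∩ f ⁻¹' Box with hS'
  have hS'def : Defin L M S' := defin_pre hfdef hS hBoxDef
  have hS'cl : IsClosed S' := hcont.preimage_isClosed_of_isClosed hScl hBoxCl
  have hS'sub : S' ⊆ S := inter_subset_left
  have hS'bd : ∀ p ∈ S', ∀ i, |p i| ≤ r := fun p hp => hSbd p (hS'sub hp)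
  have hb' : b ∈ closure (f '' S') := by
    rw [mem_closure_box] at hb ⊢
    intro ε hε
    obtain ⟨q, hq, hclose⟩ := hb (min ε 1) (lt_min hε one_pos)
    obtain ⟨p, hpS, rfl⟩ := hq
    refine ⟨f p, ⟨p, ⟨hpS, ?_⟩, rfl⟩, fun j => lt_of_lt_of_le (hclose j) (min_le_left _ _)⟩
    rw [mem_preimage, hBoxMem]
    intro j
    rw [abs_sub_comm]
    exact le_of_lt (lt_of_lt_of_le (hclose j) (min_le_right _ _))
  -- the graph of f on S'
  set G : Set (Fin (h+k) → M) := {x : Fin (h+k) → M | (fun i => x (Fin.natAdd h i)) ∈ S' ∧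
      (fun j => x (Fin.castAdd k j)) = f (fun i => x (Fin.natAdd h i))} with hG
  have hGcl : IsClosed G := graph_isClosed hS'cl (hcont.mono hS'sub)
  have hGdef : Defin L M G := graph_defin hfdef hS'def
  obtain ⟨rb, hrb⟩ := exists_ge_all (fun j => |b j|)
  have hGbd : ∀ x ∈ G, ∀ i, |x i| ≤ max r (rb + 1) := by
    rintro x ⟨hxS, hxEq⟩ i
    refine Fin.addCases (fun j => ?_) (fun i' => ?_) i
    · have h1 : x (Fin.castAdd k j) = f (fun i => x (Fin.natAdd h i)) j := congrFun hxEq j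
      have h2 := (hBoxMem (f (fun i => x (Fin.natAdd h i)))).1 hxS.2 j
      rw [abs_sub_le_iff] at h2
      have h3 := le_abs_self (b j)
      have h4 := neg_abs_le (b j)
      have h5 := hrb j
      rw [h1, abs_le]
      constructor
      · have hneg := neg_le_neg (le_max_right r (rb+1))
        linarith [h2.2]
      · linarith [h2.1, le_max_right r (rb+1)]
    · exact le_trans (hS'bd (fun i => x (Fin.natAdd h i)) hxS i') (le_max_left _ _)
  have hproj := iter_proj hlt hadd homin k G hGdef hGcl _ hGbd
  have himg : (fun p : Fin (h + k) → M => p ∘ Fin.castAdd k) '' G = f '' S' := by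
    ext q
    simp only [mem_image]
    constructor
    · rintro ⟨x, ⟨hxS, hxEq⟩, rfl⟩
      exact ⟨_, hxS, by rw [← hxEq]; rfl⟩
    · rintro ⟨p, hp, rfl⟩
      refine ⟨Fin.append (f p) p, ⟨?_, ?_⟩, ?_⟩
      · have : (fun i => Fin.append (f p) p (Fin.natAdd h i)) = p := by
          funext i; exact Fin.append_right _ _ i
        rwa [this]
      · have h1 : (fun i => Fin.append (f p) p (Fin.natAdd h i)) = p := by
          funext i; exact Fin.append_right _ _ i
        have h2 : (fun j => Fin.append (f p) p (Fin.castAdd k j)) = f p := by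
          funext j; exact Fin.append_left _ _ j
        rw [h1, h2]
      · funext j; exact Fin.append_left _ _ j
  rw [himg] at hproj
  have : b ∈ f '' S' := by
    rw [← hproj.closure_eq]
    exact hb'
  exact image_mono (f := f) hS'sub this

end ImageClosed

section Spectral
variable {L : FirstOrder.Language} {M : Type} [L.Structure M]

theorem OType.ext' [TopologicalSpace M] {k : ℕ} {A : Set (Fin k → M)}
    {a b : OType L M A} (hsets : a.sets = b.sets) : a = b := by
  cases a; cases b; cases hsets; rfl

theorem otype_closure_mem [TopologicalSpace M] {k : ℕ} {A : Set (Fin k → M)}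
    {x z : OType L M A}
    (hgen : ∀ U : Set (Fin k → M), IsOpen U → Defin L M U →
      U ∩ A ∈ z.sets → U ∩ A ∈ x.sets) :
    z ∈ closure ({x} : Set (OType L M A)) := by
  rw [mem_closure_iff]
  intro O hO hzO
  suffices hx : x ∈ O by exact ⟨x, hx, rfl⟩
  have key : ∀ O' : Set (OType L M A),
      TopologicalSpace.GenerateOpen
        {V | ∃ U : Set (Fin k → M), IsOpen U ∧ Defin L M U ∧
          V = {w : OType L M A | U ∩ A ∈ w.sets}} O' → z ∈ O' → x ∈ O' := by
    intro O' hO'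
    induction hO' with
    | basic V hV =>
      intro hzV
      obtain ⟨U, hU, hUdef, rfl⟩ := hV
      exact hgen U hU hUdef hzV
    | univ => intro _; trivial
    | inter _ _ _ _ ih1 ih2 =>
      rintro ⟨h1, h2⟩
      exact ⟨ih1 h1, ih2 h2⟩
    | sUnion S _ ih =>
      rintro ⟨s, hs, hzs⟩
      exact ⟨s, hs, ih s hs hzs⟩
  exact key O hO hzO

theorem otype_closure_rev [TopologicalSpace M] {k : ℕ} {B : Set (Fin k → M)}
    {w y : OType L M B} (hy : y ∈ closure ({w} : Set (OType L M B)))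
    {U : Set (Fin k → M)} (hU : IsOpen U) (hUdef : Defin L M U)
    (hmem : U ∩ B ∈ y.sets) : U ∩ B ∈ w.sets := by
  rw [mem_closure_iff] at hy
  have hV : IsOpen {v : OType L M B | U ∩ B ∈ v.sets} :=
    TopologicalSpace.isOpen_generateFrom_of_mem ⟨U, hU, hUdef, rfl⟩
  obtain ⟨w', hw'V, hw'⟩ := hy _ hV hmem
  rw [mem_singleton_iff] at hw'
  rw [← hw']
  exact hw'V

end Spectral
/-- Let `M` be an o-minimal expansion of a real closed field, `A ⊆ Mᵏ` definably compact,
`f : A → B` definable continuous, `x ∈ Sp A`, and `y ∈ Sp B` with `y ≤ Sp f (x)` in the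
specialization order. Then there is `z ∈ Sp A` with `z ≤ x` and `Sp f (z) = y`; moreover if
`y < Sp f (x)` then `z < x`. -/
theorem stmt19 {L : FirstOrder.Language} {M : Type} [L.Structure M]
    [Field M] [LinearOrder M] [IsStrictOrderedRing M] [TopologicalSpace M] [OrderTopology M]
    (hmin : IsOMin L M) (hfld : ExpandsField L M)
    {k h : ℕ} (A : Set (Fin k → M)) (B : Set (Fin h → M))
    (hA : Defin L M A) (hAcl : IsClosed A) (hAbd : ∃ r : M, ∀ p ∈ A, ∀ i, |p i| ≤ r)
    (hB : Defin L M B)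
    (f : (Fin k → M) → (Fin h → M))
    (hfdef : Defin L M
      {p : Fin (k + h) → M |
        f (fun i => p (Fin.castAdd h i)) = fun j => p (Fin.natAdd k j)})
    (hmap : Set.MapsTo f A B) (hcont : ContinuousOn f A)
    (F : OType L M A → OType L M B) (hF : IsSpecMap L M A B f F)
    (x : OType L M A) (y : OType L M B)
    (hy : y ∈ closure ({F x} : Set (OType L M B))) :
    ∃ z : OType L M A, z ∈ closure ({x} : Set (OType L M A)) ∧ F z = y ∧
      (y ≠ F x → z ≠ x) := by
  obtain ⟨r, hr⟩ := hAbd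
  have hlt : Defin L M {p : Fin 2 → M | p 0 < p 1} := hmin.1
  have homin := hmin.2
  have hadd : Defin L M {p : Fin 3 → M | p 0 + p 1 = p 2} := hfld.1
  set ℬ : Set (Set (Fin k → M)) := {s | ∃ t ∈ y.sets, ∃ C : Set (Fin k → M),
    IsClosed C ∧ Defin L M C ∧ A ∩ C ∈ x.sets ∧ s = (A ∩ f ⁻¹' t) ∩ (A ∩ C)} with hBdef
  -- key nonemptiness via definable compactness
  have hkey : ∀ t ∈ y.sets, ∀ C : Set (Fin k → M), IsClosed C → Defin L M C →
      A ∩ C ∈ x.sets → ((A ∩ f ⁻¹' t) ∩ (A ∩ C)).Nonempty := by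
    intro t ht C hCcl hCdef hCx
    have hACdef : Defin L M (A ∩ C) := hA.inter hCdef
    have hACcl : IsClosed (A ∩ C) := hAcl.inter hCcl
    have hACbd : ∀ p ∈ A ∩ C, ∀ i, |p i| ≤ r := fun p hp => hr p hp.1
    have hDdef : Defin L M (f '' (A ∩ C)) := defin_img hfdef hACdef
    have hDcl : IsClosed (f '' (A ∩ C)) :=
      image_closed hlt hadd homin hfdef hACdef hACcl hACbd (hcont.mono inter_subset_left)
    have hDsubB : f '' (A ∩ C) ⊆ B := by
      rintro q ⟨p, hp, rfl⟩
      exact hmap hp.1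
    have hpre : Defin L M (A ∩ f ⁻¹' (f '' (A ∩ C))) := defin_pre hfdef hA hDdef
    have hDx : A ∩ f ⁻¹' (f '' (A ∩ C)) ∈ x.sets := by
      rcases x.complete _ hpre inter_subset_left with hc | hc
      · exact hc
      · exfalso
        have hint := x.inter_mem _ hc _ hCx
        obtain ⟨p, hp1, hp2⟩ := x.nonempty_mem _ hint
        exact hp1.2 ⟨hp2.1, ⟨p, hp2, rfl⟩⟩
    have hDFx : f '' (A ∩ C) ∈ (F x).sets := (hF x _).2 ⟨hDdef, hDsubB, hDx⟩
    have hDy : f '' (A ∩ C) ∈ y.sets := by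
      rcases y.complete _ hDdef hDsubB with hc | hc
      · exact hc
      · exfalso
        have hBD : (f '' (A ∩ C))ᶜ ∩ B ∈ y.sets := by
          convert hc using 1
          ext q
          simp only [mem_inter_iff, mem_compl_iff, mem_diff]
          tauto
        have hFxBD := otype_closure_rev hy hDcl.isOpen_compl hDdef.compl hBD
        have hint := (F x).inter_mem _ hFxBD _ hDFx
        obtain ⟨q, hq1, hq2⟩ := (F x).nonempty_mem _ hint
        exact hq1.1 hq2
    have hint := y.inter_mem _ ht _ hDy
    obtain ⟨q, hqt, hqD⟩ := y.nonempty_mem _ hint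
    obtain ⟨p, hpAC, rfl⟩ := hqD
    exact ⟨p, ⟨⟨hpAC.1, hqt⟩, hpAC⟩⟩
  have hb₀ : (A ∩ f ⁻¹' B) ∩ (A ∩ univ) ∈ ℬ :=
    ⟨B, y.top_mem, univ, isClosed_univ, defin_univ, by rw [inter_univ]; exact x.top_mem, rfl⟩
  have hb₀eq : (A ∩ f ⁻¹' B) ∩ (A ∩ univ) = A := by
    ext p
    simp only [mem_inter_iff, mem_preimage, mem_univ, and_true]
    exact ⟨fun hp => hp.1.1, fun hp => ⟨⟨hp, hmap hp⟩, hp⟩⟩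
  have hBne : ∀ s ∈ ℬ, s.Nonempty := by
    rintro s ⟨t, ht, C, hCcl, hCdef, hCx, rfl⟩
    exact hkey t ht C hCcl hCdef hCx
  have hBinter : ∀ s1 ∈ ℬ, ∀ s2 ∈ ℬ, s1 ∩ s2 ∈ ℬ := by
    rintro s1 ⟨t1, ht1, C1, hC1cl, hC1def, hC1x, rfl⟩ s2 ⟨t2, ht2, C2, hC2cl, hC2def, hC2x, rfl⟩
    refine ⟨t1 ∩ t2, y.inter_mem _ ht1 _ ht2, C1 ∩ C2, hC1cl.inter hC2cl,
      hC1def.inter hC2def, ?_, ?_⟩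
    · have heq : A ∩ (C1 ∩ C2) = (A ∩ C1) ∩ (A ∩ C2) := by
        ext p
        simp only [mem_inter_iff]
        tauto
      rw [heq]
      exact x.inter_mem _ hC1x _ hC2x
    · ext p
      simp only [mem_inter_iff, mem_preimage]
      tauto
  have hfinint : ∀ T : Set (Set (Fin k → M)), T.Finite → T ⊆ ℬ →
      ∃ b ∈ ℬ, b ⊆ ⋂₀ T := by
    intro T hTfin
    refine Set.Finite.induction_on (motive := fun T _ => T ⊆ ℬ → ∃ b ∈ ℬ, b ⊆ ⋂₀ T) T hTfin (fun _ => ⟨_, hb₀, by simp⟩) ?_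
    rintro a s hnot hsfin ih hsub
    obtain ⟨b, hb, hbsub⟩ := ih (fun u hu => hsub (mem_insert_of_mem _ hu))
    refine ⟨a ∩ b, hBinter _ (hsub (mem_insert _ _)) _ hb, ?_⟩
    rw [sInter_insert]
    exact inter_subset_inter le_rfl hbsub
  haveI hNB : (Filter.generate ℬ).NeBot := by
    rw [Filter.generate_neBot_iff]
    intro T hTsub hTfin
    obtain ⟨b, hb, hsub⟩ := hfinint T hTfin hTsub
    exact (hBne b hb).mono hsub
  set 𝒰 : Ultrafilter (Fin k → M) := Ultrafilter.of (Filter.generate ℬ) with h𝒰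
  have hUof : ∀ s ∈ ℬ, s ∈ 𝒰 := fun s hs =>
    Ultrafilter.of_le _ (Filter.mem_generate_of_mem hs)
  have hAU : A ∈ 𝒰 := by
    rw [← hb₀eq]
    exact hUof _ hb₀
  set z : OType L M A :=
    { sets := {s | Defin L M s ∧ s ⊆ A ∧ s ∈ 𝒰}
      definable_mem := fun s hs => hs.1
      subset_mem := fun s hs => hs.2.1
      top_mem := ⟨hA, subset_rfl, hAU⟩
      nonempty_mem := fun s hs => Ultrafilter.nonempty_of_mem hs.2.2
      inter_mem := fun s hs t' ht' =>
        ⟨hs.1.inter ht'.1, fun p hp => hs.2.1 hp.1, Filter.inter_mem hs.2.2 ht'.2.2⟩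
      complete := fun s hsdef hssub => by
        rcases 𝒰.mem_or_compl_mem s with hc | hc
        · exact Or.inl ⟨hsdef, hssub, hc⟩
        · refine Or.inr ⟨Set.Definable.sdiff hA hsdef, diff_subset, ?_⟩
          rw [Set.diff_eq]
          exact Filter.inter_mem hAU hc } with hzdef
  have hmemz : ∀ t ∈ y.sets, A ∩ f ⁻¹' t ∈ z.sets := by
    intro t ht
    refine ⟨defin_pre hfdef hA (y.definable_mem t ht), inter_subset_left, ?_⟩
    have h1 : (A ∩ f ⁻¹' t) ∩ (A ∩ univ) ∈ ℬ :=
      ⟨t, ht, univ, isClosed_univ, defin_univ, by rw [inter_univ]; exact x.top_mem, rfl⟩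
    have h2 := hUof _ h1
    have heq : (A ∩ f ⁻¹' t) ∩ (A ∩ univ) = A ∩ f ⁻¹' t := by
      ext p
      simp only [mem_inter_iff, mem_preimage, mem_univ, and_true]
      tauto
    rwa [heq] at h2
  have hFz : F z = y := by
    apply OType.ext'
    ext t
    rw [hF z t]
    constructor
    · rintro ⟨htdef, htB, hmem⟩
      rcases y.complete t htdef htB with hc | hc
      · exact hc
      · exfalso
        have h1 : A ∩ f ⁻¹' (B \ t) ∈ z.sets := hmemz _ hc
        have h2 := Filter.inter_mem hmem.2.2 h1.2.2
        obtain ⟨p, hp1, hp2⟩ := Ultrafilter.nonempty_of_mem h2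
        exact hp2.2.2 hp1.2
    · intro ht
      exact ⟨y.definable_mem t ht, y.subset_mem t ht, hmemz t ht⟩
  have hzx : z ∈ closure ({x} : Set (OType L M A)) := by
    apply otype_closure_mem
    intro U hUop hUdef hUz
    rcases x.complete (U ∩ A) (hUdef.inter hA) inter_subset_right with hc | hc
    · exact hc
    · exfalso
      have hAC : A ∩ Uᶜ ∈ x.sets := by
        convert hc using 1
        ext p
        simp only [mem_inter_iff, mem_compl_iff, mem_diff]
        tauto
      have h1 : (A ∩ f ⁻¹' B) ∩ (A ∩ Uᶜ) ∈ ℬ :=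
        ⟨B, y.top_mem, Uᶜ, hUop.isClosed_compl, hUdef.compl, hAC, rfl⟩
      have h2 := hUof _ h1
      have heq : (A ∩ f ⁻¹' B) ∩ (A ∩ Uᶜ) = A ∩ Uᶜ := by
        ext p
        simp only [mem_inter_iff, mem_preimage, mem_compl_iff]
        exact ⟨fun hp => hp.2, fun hp => ⟨⟨hp.1, hmap hp.1⟩, hp⟩⟩
      rw [heq] at h2
      have h3 := Filter.inter_mem hUz.2.2 h2
      obtain ⟨p, hp1, hp2⟩ := Ultrafilter.nonempty_of_mem h3
      exact hp2.2 hp1.1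
  refine ⟨z, hzx, hFz, fun hne heq => hne ?_⟩
  rw [← hFz, heq]
end
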